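/- arXiv:2107.13854 — 4 statements merged into one kernel-verified Lean document; each statement's English description precedes it below -/
import Mathlib

section
/- For any bounded function f: ℝ → ℝ with finite Hölder seminorms of orders θ₁-ε₀ and θ₁+ε₀, where θ₁ ∈ (0,1) and 0 < ε₀ < ½min{θ₁, 1-θ₁}, the fractional Laplacian satisfies the interpolation bound ‖Λ^{θ₁} f‖_{L∞} ≤ C (‖f‖_{Ċ^{θ₁-ε₀}} ‖f‖_{Ċ^{θ₁+ε₀}})^{1/2}. -/
open Real MeasureTheory

section Aux

open Set

private lemma integrable_comp_abs' {H : ℝ → ℝ} (h : IntegrableOn H (Ioi (0:ℝ))) :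
    Integrable (fun z : ℝ => H |z|) := by
  have int_Ioi : IntegrableOn (fun x : ℝ => H |x|) (Ioi 0) :=
    h.congr_fun (fun x hx => by rw [abs_of_pos (by exact hx)]) measurableSet_Ioi
  have int_Iic : IntegrableOn (fun x : ℝ => H |x|) (Iic 0) := by
    rw [← Measure.map_neg_eq_self (volume : Measure ℝ)]
    have m : MeasurableEmbedding fun x : ℝ => -x := (Homeomorph.neg ℝ).measurableEmbedding
    rw [m.integrableOn_map_iff]
    simp_rw [Function.comp_def, abs_neg, neg_preimage, neg_Iic, neg_zero]
    exact Iff.mpr integrableOn_Ici_iff_integrableOn_Ioi int_Ioi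
  have : IntegrableOn (fun x : ℝ => H |x|) (Iic 0 ∪ Ioi 0) :=
    integrableOn_union.mpr ⟨int_Iic, int_Ioi⟩
  rwa [Iic_union_Ioi, integrableOn_univ] at this

end Aux

/-- Interpolation bound for the fractional Laplacian
`Λ^{θ₁} f (s) = ∫ (f s - f (s-z))/|z|^{1+θ₁} dz`:
`‖Λ^{θ₁} f‖_{L∞} ≤ C (‖f‖_{Ċ^{θ₁-ε₀}} ‖f‖_{Ċ^{θ₁+ε₀}})^{1/2}`. -/
theorem stmt3 (θ₁ ε₀ : ℝ) (hθ : θ₁ ∈ Set.Ioo (0 : ℝ) 1)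
    (hε0 : 0 < ε₀) (hε1 : ε₀ < min θ₁ (1 - θ₁) / 2) :
    ∃ C > 0, ∀ f : ℝ → ℝ, (∃ B : ℝ, ∀ x, |f x| ≤ B) →
      ∀ M₁ M₂ : ℝ, 0 ≤ M₁ → 0 ≤ M₂ →
      (∀ s s' : ℝ, |f s - f s'| ≤ M₁ * |s - s'| ^ (θ₁ - ε₀)) →
      (∀ s s' : ℝ, |f s - f s'| ≤ M₂ * |s - s'| ^ (θ₁ + ε₀)) →
      ∀ s : ℝ, |∫ z : ℝ, (f s - f (s - z)) / |z| ^ (1 + θ₁)| ≤ C * Real.sqrt (M₁ * M₂) := by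
  obtain ⟨hθ0, hθ1⟩ := hθ
  have hεθ : ε₀ < θ₁ / 2 := lt_of_lt_of_le hε1 (by
    have := min_le_left θ₁ (1 - θ₁); linarith)
  have hε₀1 : ε₀ < 1 := by linarith
  refine ⟨4 / ε₀, by positivity, ?_⟩
  intro f _ M₁ M₂ hM₁ hM₂ h1 h2 s
  rcases eq_or_lt_of_le hM₁ with hM₁0 | hM₁p
  · have hz : ∀ z : ℝ, f s - f (s - z) = 0 := fun z => by
      have h := h1 s (s - z)
      rw [← hM₁0, zero_mul] at h
      have := abs_nonneg (f s - f (s - z))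
      have := abs_nonpos_iff.mp h
      linarith [abs_nonneg (f s - f (s - z))]
    simp only [hz, zero_div, integral_zero, abs_zero]
    positivity
  rcases eq_or_lt_of_le hM₂ with hM₂0 | hM₂p
  · have hz : ∀ z : ℝ, f s - f (s - z) = 0 := fun z => by
      have h := h2 s (s - z)
      rw [← hM₂0, zero_mul] at h
      exact abs_nonpos_iff.mp h
    simp only [hz, zero_div, integral_zero, abs_zero]
    positivity
  -- main case
  set l : ℝ := (M₁ / M₂) ^ ((2 * ε₀)⁻¹) with hl_def
  have hdivpos : 0 < M₁ / M₂ := div_pos hM₁p hM₂p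
  have hlpos : 0 < l := Real.rpow_pos_of_pos hdivpos _
  have hle : l ^ ε₀ = Real.sqrt (M₁ / M₂) := by
    rw [hl_def, ← Real.rpow_mul hdivpos.le,
      show (2 * ε₀)⁻¹ * ε₀ = 1 / 2 by field_simp, ← Real.sqrt_eq_rpow]
  have hle2 : l ^ (-ε₀) = Real.sqrt (M₂ / M₁) := by
    rw [hl_def, ← Real.rpow_mul hdivpos.le,
      show (2 * ε₀)⁻¹ * (-ε₀) = -(1 / 2) by field_simp,
      Real.rpow_neg hdivpos.le, ← Real.sqrt_eq_rpow, ← Real.sqrt_inv, inv_div]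
  have sM2 : M₂ * l ^ ε₀ = Real.sqrt (M₁ * M₂) := by
    rw [hle, show M₁ / M₂ = M₁ * M₂ / M₂ ^ 2 by field_simp,
      Real.sqrt_div (by positivity), Real.sqrt_sq hM₂p.le]
    field_simp
  have sM1 : M₁ * l ^ (-ε₀) = Real.sqrt (M₁ * M₂) := by
    rw [hle2, show M₂ / M₁ = M₁ * M₂ / M₁ ^ 2 by field_simp,
      Real.sqrt_div (by positivity), Real.sqrt_sq hM₁p.le]
    field_simp
  set H : ℝ → ℝ := fun t => if t ≤ l then M₂ * t ^ (ε₀ - 1) else M₁ * t ^ (-1 - ε₀) with hH_def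
  have hpt : ∀ z : ℝ, |(f s - f (s - z)) / |z| ^ (1 + θ₁)| ≤ H |z| := by
    intro z
    rcases eq_or_ne z 0 with rfl | hz
    · simp [hH_def, hlpos.le, Real.zero_rpow (show ε₀ - 1 ≠ 0 by linarith)]
    · have hza : 0 < |z| := abs_pos.mpr hz
      have hd : (0:ℝ) < |z| ^ (1 + θ₁) := Real.rpow_pos_of_pos hza _
      rw [abs_div, abs_of_pos hd]
      by_cases hcase : |z| ≤ l
      · rw [hH_def]
        simp only [if_pos hcase]
        rw [div_le_iff₀ hd]
        calc |f s - f (s - z)| ≤ M₂ * |s - (s - z)| ^ (θ₁ + ε₀) := h2 s (s - z)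
          _ = M₂ * |z| ^ (θ₁ + ε₀) := by rw [show s - (s - z) = z by ring]
          _ = M₂ * |z| ^ (ε₀ - 1) * |z| ^ (1 + θ₁) := by
              rw [mul_assoc, ← Real.rpow_add hza, show ε₀ - 1 + (1 + θ₁) = θ₁ + ε₀ by ring]
      · rw [hH_def]
        simp only [if_neg hcase]
        rw [div_le_iff₀ hd]
        calc |f s - f (s - z)| ≤ M₁ * |s - (s - z)| ^ (θ₁ - ε₀) := h1 s (s - z)
          _ = M₁ * |z| ^ (θ₁ - ε₀) := by rw [show s - (s - z) = z by ring]
          _ = M₁ * |z| ^ (-1 - ε₀) * |z| ^ (1 + θ₁) := by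
              rw [mul_assoc, ← Real.rpow_add hza, show -1 - ε₀ + (1 + θ₁) = θ₁ - ε₀ by ring]
  have i1 : IntegrableOn (fun t : ℝ => M₂ * t ^ (ε₀ - 1)) (Set.Ioc 0 l) := by
    have h := intervalIntegral.intervalIntegrable_rpow' (r := ε₀ - 1)
      (show (-1:ℝ) < ε₀ - 1 by linarith) (a := 0) (b := l)
    rw [intervalIntegrable_iff_integrableOn_Ioc_of_le hlpos.le] at h
    exact h.const_mul M₂
  have i2 : IntegrableOn (fun t : ℝ => M₁ * t ^ (-1 - ε₀)) (Set.Ioi l) :=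
    (integrableOn_Ioi_rpow_of_lt (by linarith) hlpos).const_mul M₁
  have i1' : IntegrableOn H (Set.Ioc 0 l) :=
    i1.congr_fun (fun t ht => (if_pos ht.2).symm) measurableSet_Ioc
  have i2' : IntegrableOn H (Set.Ioi l) :=
    i2.congr_fun (fun t ht => (if_neg (not_le.mpr ht)).symm) measurableSet_Ioi
  have hHint : IntegrableOn H (Set.Ioi 0) := by
    have h := i1'.union i2'
    rwa [Set.Ioc_union_Ioi_eq_Ioi hlpos.le] at h
  have hint : Integrable (fun z : ℝ => H |z|) := integrable_comp_abs' hHint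
  have step1 : |∫ z : ℝ, (f s - f (s - z)) / |z| ^ (1 + θ₁)| ≤ ∫ z : ℝ, H |z| := by
    calc |∫ z : ℝ, (f s - f (s - z)) / |z| ^ (1 + θ₁)|
        ≤ ∫ z : ℝ, |(f s - f (s - z)) / |z| ^ (1 + θ₁)| := by
          have h := norm_integral_le_integral_norm (μ := volume)
            (fun z : ℝ => (f s - f (s - z)) / |z| ^ (1 + θ₁))
          simpa only [Real.norm_eq_abs] using h
      _ ≤ ∫ z : ℝ, H |z| :=
          integral_mono_of_nonneg (Filter.Eventually.of_forall fun z => abs_nonneg _) hint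
            (Filter.Eventually.of_forall hpt)
  have val1 : ∫ t in Set.Ioc (0:ℝ) l, H t = M₂ * (l ^ ε₀ / ε₀) := by
    rw [setIntegral_congr_fun measurableSet_Ioc (fun t ht => if_pos ht.2),
      ← intervalIntegral.integral_of_le hlpos.le, intervalIntegral.integral_const_mul,
      _root_.integral_rpow (Or.inl (by linarith)),
      show ε₀ - 1 + 1 = ε₀ by ring, Real.zero_rpow (ne_of_gt hε0)]
    ring
  have val2 : ∫ t in Set.Ioi l, H t = M₁ * (l ^ (-ε₀) / ε₀) := by
    rw [setIntegral_congr_fun measurableSet_Ioi (fun t ht => if_neg (not_le.mpr ht)),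
      integral_const_mul, integral_Ioi_rpow_of_lt (show -1 - ε₀ < -1 by linarith) hlpos,
      show -1 - ε₀ + 1 = -ε₀ by ring]
    field_simp
  have hsplit : ∫ t in Set.Ioi (0:ℝ), H t =
      (∫ t in Set.Ioc (0:ℝ) l, H t) + ∫ t in Set.Ioi l, H t := by
    rw [← Set.Ioc_union_Ioi_eq_Ioi hlpos.le,
      setIntegral_union (Set.Ioc_disjoint_Ioi le_rfl) measurableSet_Ioi i1' i2']
  have hval : ∫ z : ℝ, H |z| = 2 * (M₂ * (l ^ ε₀ / ε₀) + M₁ * (l ^ (-ε₀) / ε₀)) := by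
    rw [integral_comp_abs (f := H), hsplit, val1, val2]
  refine step1.trans ?_
  rw [hval]
  have e1 : M₂ * (l ^ ε₀ / ε₀) = Real.sqrt (M₁ * M₂) / ε₀ := by
    rw [← sM2]; ring
  have e2 : M₁ * (l ^ (-ε₀) / ε₀) = Real.sqrt (M₁ * M₂) / ε₀ := by
    rw [← sM1]; ring
  rw [e1, e2]
  ring_nf
  linarith [Real.sqrt_nonneg (M₁ * M₂)]
end

section
/- Let K(t,x) = 8t/(t² + 64π²x²). For every t > 0 and α ∈ ℝ, the L¹ norm in x of the finite difference K(t,x) - K(t,x-α) satisfies ∫_ℝ |K(t,x) - K(t,x-α)| dx ≤ C min{1, |α|/t}. -/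
open Real MeasureTheory

/-- The Poisson-type kernel of `∂ₜ + Λ/4` on `ℝ`. -/
noncomputable def K (t x : ℝ) : ℝ := 8 * t / (t ^ 2 + 64 * Real.pi ^ 2 * x ^ 2)

lemma intg (t : ℝ) (ht : 0 < t) :
    Integrable (fun x : ℝ => (t ^ 2 + 64 * Real.pi ^ 2 * x ^ 2)⁻¹) := by
  have h8 : (8 * π / t) ≠ 0 := by positivity
  have := (integrable_inv_one_add_sq.comp_mul_left' h8).const_mul (t ^ 2)⁻¹
  refine this.congr ?_
  filter_upwards with x
  have ht2 : (t:ℝ)^2 ≠ 0 := by positivity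
  field_simp
  ring

lemma intval (t : ℝ) (ht : 0 < t) :
    ∫ x : ℝ, (t ^ 2 + 64 * Real.pi ^ 2 * x ^ 2)⁻¹ = (8 * t)⁻¹ := by
  have h1 : ∀ x : ℝ, (t ^ 2 + 64 * Real.pi ^ 2 * x ^ 2)⁻¹
      = (t ^ 2)⁻¹ * (1 + ((8 * π / t) * x) ^ 2)⁻¹ := by
    intro x
    have ht2 : (t:ℝ)^2 ≠ 0 := by positivity
    field_simp
    ring
  simp_rw [h1]
  rw [integral_const_mul, Measure.integral_comp_mul_left (fun y => (1 + y ^ 2)⁻¹) (8 * π / t),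
    integral_univ_inv_one_add_sq]
  have : |(8 * π / t)⁻¹| = t / (8 * π) := by
    rw [abs_of_pos (by positivity)]
    field_simp
  rw [this, smul_eq_mul]
  have hπ := pi_pos
  field_simp

/-- `∫ |K(t,x) - K(t,x-α)| dx ≤ C min{1, |α|/t}`. -/
theorem stmt7 :
    ∃ C > 0, ∀ t : ℝ, 0 < t → ∀ α : ℝ,
      (∫ x : ℝ, |K t x - K t (x - α)|) ≤ C * min 1 (|α| / t) := by
  have hπ := pi_pos
  refine ⟨2 + 32 * π, by positivity, fun t ht α => ?_⟩
  -- integrability facts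
  have hB : Integrable (fun x : ℝ => (t ^ 2 + 64 * Real.pi ^ 2 * x ^ 2)⁻¹) := intg t ht
  have hA : Integrable (fun x : ℝ => (t ^ 2 + 64 * Real.pi ^ 2 * (x - α) ^ 2)⁻¹) :=
    hB.comp_sub_right α
  have hK : Integrable (K t) := by
    refine (hB.const_mul (8 * t)).congr ?_
    filter_upwards with x
    simp [K, div_eq_mul_inv]
  have hK' : Integrable (fun x : ℝ => K t (x - α)) := hK.comp_sub_right α
  have hKnn : ∀ x : ℝ, 0 ≤ K t x := by
    intro x
    have : (0:ℝ) < t ^ 2 + 64 * Real.pi ^ 2 * x ^ 2 := by positivity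
    exact div_nonneg (by positivity) this.le
  have hKval : ∫ x : ℝ, K t x = 1 := by
    simp only [K, div_eq_mul_inv]
    rw [integral_const_mul, intval t ht]
    field_simp
  have hdiffInt : Integrable (fun x : ℝ => |K t x - K t (x - α)|) := (hK.sub hK').abs
  -- Bound 1 : integral ≤ 2
  have bound1 : (∫ x : ℝ, |K t x - K t (x - α)|) ≤ 2 := by
    have hmono : (∫ x : ℝ, |K t x - K t (x - α)|) ≤ ∫ x : ℝ, (K t x + K t (x - α)) := by
      refine integral_mono hdiffInt (hK.add hK') fun x => ?_
      calc |K t x - K t (x - α)| ≤ |K t x| + |K t (x - α)| := abs_sub _ _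
        _ = K t x + K t (x - α) := by rw [abs_of_nonneg (hKnn x), abs_of_nonneg (hKnn _)]
    have : (∫ x : ℝ, (K t x + K t (x - α))) = 2 := by
      rw [integral_add hK hK', integral_sub_right_eq_self (K t) α, hKval]
      norm_num
    linarith
  -- Bound 2 : integral ≤ 8 π |α| / t
  have key : ∀ x : ℝ, |K t x - K t (x - α)| ≤
      32 * π * |α| * ((t ^ 2 + 64 * Real.pi ^ 2 * x ^ 2)⁻¹
        + (t ^ 2 + 64 * Real.pi ^ 2 * (x - α) ^ 2)⁻¹) := by
    intro x
    set B := t ^ 2 + 64 * Real.pi ^ 2 * x ^ 2 with hBdef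
    set A := t ^ 2 + 64 * Real.pi ^ 2 * (x - α) ^ 2 with hAdef
    have hBpos : 0 < B := by positivity
    have hApos : 0 < A := by positivity
    have hdiff_eq : K t x - K t (x - α) = 8 * t * (64 * π ^ 2 * α * (α - 2 * x)) / (B * A) := by
      simp only [K, ← hBdef, ← hAdef]
      field_simp
      ring
    have h1 : 16 * π * t * |x - α| ≤ A := by
      nlinarith [sq_nonneg (t - 8 * π * |x - α|), sq_abs (x - α), abs_nonneg (x - α)]
    have h2 : 16 * π * t * |x| ≤ B := by
      nlinarith [sq_nonneg (t - 8 * π * |x|), sq_abs x, abs_nonneg x]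
    have h3 : |α - 2 * x| ≤ |x - α| + |x| := by
      have h : α - 2 * x = -((x - α) + x) := by ring
      rw [h, abs_neg]
      exact abs_add_le _ _
    have c1 : 16 * π * t * |α - 2 * x| ≤ A + B := by
      have := mul_le_mul_of_nonneg_left h3 (show (0:ℝ) ≤ 16 * π * t by positivity)
      rw [mul_add] at this
      linarith
    have hnum : 8 * t * (64 * π ^ 2 * |α| * |α - 2 * x|) ≤ 32 * π * |α| * (A + B) := by
      have := mul_le_mul_of_nonneg_left c1 (abs_nonneg α)
      nlinarith [pi_pos]
    have habs : |8 * t * (64 * π ^ 2 * α * (α - 2 * x))| =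
        8 * t * (64 * π ^ 2 * |α| * |α - 2 * x|) := by
      rw [abs_mul, abs_mul, abs_mul, abs_mul,
        show |(8:ℝ)| = 8 from abs_of_pos (by norm_num), abs_of_pos ht,
        abs_of_pos (show (0:ℝ) < 64 * π ^ 2 by positivity)]
    have hrhs : (32 * π * |α|) * (B⁻¹ + A⁻¹) = 32 * π * |α| * (A + B) / (B * A) := by
      field_simp
    rw [hdiff_eq, abs_div, habs, abs_of_pos (mul_pos hBpos hApos), hrhs]
    gcongr
  have bound2 : (∫ x : ℝ, |K t x - K t (x - α)|) ≤ 8 * π * |α| / t := by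
    have hmono : (∫ x : ℝ, |K t x - K t (x - α)|) ≤
        ∫ x : ℝ, 32 * π * |α| * ((t ^ 2 + 64 * Real.pi ^ 2 * x ^ 2)⁻¹
          + (t ^ 2 + 64 * Real.pi ^ 2 * (x - α) ^ 2)⁻¹) :=
      integral_mono hdiffInt ((hB.add hA).const_mul _) key
    have hval : (∫ x : ℝ, 32 * π * |α| * ((t ^ 2 + 64 * Real.pi ^ 2 * x ^ 2)⁻¹
          + (t ^ 2 + 64 * Real.pi ^ 2 * (x - α) ^ 2)⁻¹)) = 8 * π * |α| / t := by
      rw [integral_const_mul, integral_add hB hA,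
        integral_sub_right_eq_self (fun x : ℝ => (t ^ 2 + 64 * Real.pi ^ 2 * x ^ 2)⁻¹) α,
        intval t ht]
      field_simp
      ring
    linarith
  -- combine
  rcases le_total (|α| / t) 1 with hc | hc
  · rw [min_eq_right hc]
    have hnn : 0 ≤ |α| / t := div_nonneg (abs_nonneg α) ht.le
    have : 8 * π * |α| / t = (8 * π) * (|α| / t) := by ring
    rw [this] at bound2
    nlinarith [bound2]
  · rw [min_eq_left hc]
    linarith
end

section
/- Let H(x) = x_{i₁}x_{i₂}x_{i₃}/|x|⁴ on ℝ²∖{0} and define D_H(A₁,A₂) = H(A₁) - H(A₂) - (A₁-A₂)·∇H(A₂). Then |D_H(A₁,A₂)| ≤ C(1/|A₁|³ + 1/|A₂|³)|A₁-A₂|² for all nonzero A₁, A₂ ∈ ℝ². -/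
open Real

/-- `H(x) = x_{i₁} x_{i₂} x_{i₃} / |x|⁴` on `ℝ² \ {0}`. -/
noncomputable def Hfun (i₁ i₂ i₃ : Fin 2) (x : EuclideanSpace ℝ (Fin 2)) : ℝ :=
  x i₁ * x i₂ * x i₃ / ‖x‖ ^ 4

namespace Stmt12Aux

local notation "E" => EuclideanSpace ℝ (Fin 2)

lemma norm_smul_clm_le {F G : Type*} [NormedAddCommGroup F] [NormedSpace ℝ F]
    [NormedAddCommGroup G] [NormedSpace ℝ G] (c : ℝ) (L : F →L[ℝ] G) :
    ‖c • L‖ ≤ |c| * ‖L‖ := by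
  refine ContinuousLinearMap.opNorm_le_bound _ (by positivity) fun v => ?_
  rw [ContinuousLinearMap.smul_apply, norm_smul, Real.norm_eq_abs, mul_assoc]
  gcongr
  exact L.le_opNorm v

lemma coord_abs_le (x : E) (i : Fin 2) : |x i| ≤ ‖x‖ := by
  have h := norm_inner_le_norm (𝕜 := ℝ) (EuclideanSpace.single i (1:ℝ)) x
  simpa [EuclideanSpace.inner_single_left, EuclideanSpace.norm_single] using h

lemma Hfun_abs_le (i₁ i₂ i₃ : Fin 2) (x : E) (hx : x ≠ 0) :
    |Hfun i₁ i₂ i₃ x| ≤ 1 / ‖x‖ := by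
  have hn : (0:ℝ) < ‖x‖ := norm_pos_iff.mpr hx
  have h1 := coord_abs_le x i₁
  have h2 := coord_abs_le x i₂
  have h3 := coord_abs_le x i₃
  have : |x i₁ * x i₂ * x i₃| ≤ ‖x‖ ^ 3 := by
    rw [abs_mul, abs_mul]
    calc |x i₁| * |x i₂| * |x i₃| ≤ ‖x‖ * ‖x‖ * ‖x‖ := by
          gcongr <;> positivity
      _ = ‖x‖ ^ 3 := by ring
  rw [Hfun, abs_div, abs_of_nonneg (by positivity : (0:ℝ) ≤ ‖x‖ ^ 4)]
  rw [div_le_div_iff₀ (by positivity) hn]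
  calc |x i₁ * x i₂ * x i₃| * ‖x‖ ≤ ‖x‖ ^ 3 * ‖x‖ := by gcongr
    _ = 1 * ‖x‖ ^ 4 := by ring

lemma contDiffOn_H (i₁ i₂ i₃ : Fin 2) :
    ContDiffOn ℝ 2 (Hfun i₁ i₂ i₃) {x : E | x ≠ 0} := by
  have hnum : ContDiff ℝ 2 (fun x : E => x i₁ * x i₂ * x i₃) := by
    have a1 : ContDiff ℝ 2 (fun x : E => x i₁) := (EuclideanSpace.proj i₁ : E →L[ℝ] ℝ).contDiff
    have a2 : ContDiff ℝ 2 (fun x : E => x i₂) := (EuclideanSpace.proj i₂ : E →L[ℝ] ℝ).contDiff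
    have a3 : ContDiff ℝ 2 (fun x : E => x i₃) := (EuclideanSpace.proj i₃ : E →L[ℝ] ℝ).contDiff
    exact (a1.mul a2).mul a3
  have hden : ContDiff ℝ 2 (fun x : E => ‖x‖ ^ 4) := by
    have : ContDiff ℝ 2 (fun x : E => (‖x‖ ^ 2) ^ 2) :=
      (contDiff_norm_sq ℝ).pow 2
    simpa [← pow_mul] using this
  exact ContDiffOn.div (hnum.contDiffOn) (hden.contDiffOn)
    (fun x hx => by
      have : (0:ℝ) < ‖x‖ := norm_pos_iff.mpr hx
      positivity)

lemma isOpen_U : IsOpen {x : E | x ≠ 0} := isOpen_ne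

lemma diffAt_H (i₁ i₂ i₃ : Fin 2) {x : E} (hx : x ≠ 0) :
    DifferentiableAt ℝ (Hfun i₁ i₂ i₃) x :=
  ((contDiffOn_H i₁ i₂ i₃).differentiableOn (by norm_num)).differentiableAt
    (isOpen_U.mem_nhds hx)

lemma contDiffOn_fderiv_H (i₁ i₂ i₃ : Fin 2) :
    ContDiffOn ℝ 1 (fderiv ℝ (Hfun i₁ i₂ i₃)) {x : E | x ≠ 0} :=
  (contDiffOn_H i₁ i₂ i₃).fderiv_of_isOpen (m := 1) isOpen_U (by norm_num)

lemma diffAt_fderiv_H (i₁ i₂ i₃ : Fin 2) {x : E} (hx : x ≠ 0) :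
    DifferentiableAt ℝ (fderiv ℝ (Hfun i₁ i₂ i₃)) x :=
  ((contDiffOn_fderiv_H i₁ i₂ i₃).differentiableOn (by norm_num)).differentiableAt
    (isOpen_U.mem_nhds hx)

lemma continuousOn_fderiv2_H (i₁ i₂ i₃ : Fin 2) :
    ContinuousOn (fderiv ℝ (fderiv ℝ (Hfun i₁ i₂ i₃))) {x : E | x ≠ 0} :=
  ((contDiffOn_fderiv_H i₁ i₂ i₃).fderiv_of_isOpen (m := 0) isOpen_U (by norm_num)).continuousOn

lemma Hfun_homog (i₁ i₂ i₃ : Fin 2) {c : ℝ} (hc : c ≠ 0) (x : E) :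
    Hfun i₁ i₂ i₃ (c • x) = c⁻¹ * Hfun i₁ i₂ i₃ x := by
  rcases eq_or_ne x 0 with rfl | hx
  · simp [Hfun]
  · have hn : (0:ℝ) < ‖x‖ := norm_pos_iff.mpr hx
    have habs : |c| ^ 4 = c ^ 4 := by
      rw [← abs_pow, abs_of_nonneg (by positivity)]
    simp only [Hfun, PiLp.smul_apply, smul_eq_mul, norm_smul, Real.norm_eq_abs, mul_pow, habs]
    field_simp

lemma fderiv_H_homog (i₁ i₂ i₃ : Fin 2) {c : ℝ} (hc : 0 < c) {x : E} (hx : x ≠ 0) :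
    fderiv ℝ (Hfun i₁ i₂ i₃) (c • x) = (c⁻¹ * c⁻¹) • fderiv ℝ (Hfun i₁ i₂ i₃) x := by
  have hc0 : c ≠ 0 := ne_of_gt hc
  have hcx : c • x ≠ 0 := smul_ne_zero hc0 hx
  -- derivative of y ↦ H (c • y) at x
  have hcomp : HasFDerivAt (fun y : E => Hfun i₁ i₂ i₃ (c • y))
      ((fderiv ℝ (Hfun i₁ i₂ i₃) (c • x)).comp (c • ContinuousLinearMap.id ℝ E)) x := by
    have h1 : HasFDerivAt (fun y : E => c • y) (c • ContinuousLinearMap.id ℝ E) x := by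
      exact (c • ContinuousLinearMap.id ℝ E).hasFDerivAt (x := x)
    exact ((diffAt_H i₁ i₂ i₃ hcx).hasFDerivAt).comp x h1
  have heq : (fun y : E => Hfun i₁ i₂ i₃ (c • y)) = fun y => c⁻¹ * Hfun i₁ i₂ i₃ y :=
    funext fun y => Hfun_homog i₁ i₂ i₃ hc0 y
  have hconst : HasFDerivAt (fun y : E => c⁻¹ * Hfun i₁ i₂ i₃ y)
      (c⁻¹ • fderiv ℝ (Hfun i₁ i₂ i₃) x) x := by
    exact ((diffAt_H i₁ i₂ i₃ hx).hasFDerivAt).const_smul c⁻¹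
  rw [heq] at hcomp
  have := hcomp.unique hconst
  ext v
  have h2 := congrArg (fun L : E →L[ℝ] ℝ => L v) this
  simp only [ContinuousLinearMap.coe_comp', Function.comp_apply, ContinuousLinearMap.smul_apply,
    ContinuousLinearMap.coe_id', id_eq, ContinuousLinearMap.coe_smul', Pi.smul_apply,
    smul_eq_mul] at h2 ⊢
  have h3 : fderiv ℝ (Hfun i₁ i₂ i₃) (c • x) (c • v)
      = c * fderiv ℝ (Hfun i₁ i₂ i₃) (c • x) v := by
    rw [map_smul]; simp [smul_eq_mul]
  rw [h3] at h2
  field_simp at h2 ⊢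
  linarith [h2]

lemma fderiv2_H_homog (i₁ i₂ i₃ : Fin 2) {c : ℝ} (hc : 0 < c) {x : E} (hx : x ≠ 0) :
    fderiv ℝ (fderiv ℝ (Hfun i₁ i₂ i₃)) (c • x)
      = (c⁻¹ * c⁻¹ * c⁻¹) • fderiv ℝ (fderiv ℝ (Hfun i₁ i₂ i₃)) x := by
  have hc0 : c ≠ 0 := ne_of_gt hc
  have hcx : c • x ≠ 0 := smul_ne_zero hc0 hx
  set F := fderiv ℝ (Hfun i₁ i₂ i₃) with hF
  have hcomp : HasFDerivAt (fun y : E => F (c • y))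
      ((fderiv ℝ F (c • x)).comp (c • ContinuousLinearMap.id ℝ E)) x := by
    have h1 : HasFDerivAt (fun y : E => c • y) (c • ContinuousLinearMap.id ℝ E) x := by
      exact (c • ContinuousLinearMap.id ℝ E).hasFDerivAt (x := x)
    exact ((diffAt_fderiv_H i₁ i₂ i₃ hcx).hasFDerivAt).comp x h1
  have heq : (fun y : E => F (c • y)) =ᶠ[nhds x] fun y => (c⁻¹ * c⁻¹) • F y := by
    filter_upwards [isOpen_U.mem_nhds hx] with y hy
    exact fderiv_H_homog i₁ i₂ i₃ hc hy
  have hconst : HasFDerivAt (fun y : E => (c⁻¹ * c⁻¹) • F y)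
      ((c⁻¹ * c⁻¹) • fderiv ℝ F x) x :=
    ((diffAt_fderiv_H i₁ i₂ i₃ hx).hasFDerivAt).const_smul (c⁻¹ * c⁻¹)
  have hcomp' : HasFDerivAt (fun y : E => (c⁻¹ * c⁻¹) • F y)
      ((fderiv ℝ F (c • x)).comp (c • ContinuousLinearMap.id ℝ E)) x :=
    hcomp.congr_of_eventuallyEq heq.symm
  have huniq := hcomp'.unique hconst
  ext v w
  have h2 := congrArg (fun L : E →L[ℝ] E →L[ℝ] ℝ => (L v) w) huniq
  simp only [ContinuousLinearMap.coe_comp', Function.comp_apply, ContinuousLinearMap.smul_apply,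
    ContinuousLinearMap.coe_id', id_eq, ContinuousLinearMap.coe_smul', Pi.smul_apply,
    smul_eq_mul] at h2 ⊢
  have h3 : fderiv ℝ F (c • x) (c • v) w = c * fderiv ℝ F (c • x) v w := by
    rw [map_smul]; simp [smul_eq_mul]
  rw [h3] at h2
  field_simp at h2 ⊢
  linarith [h2]

lemma exists_bounds (i₁ i₂ i₃ : Fin 2) :
    ∃ M : ℝ, 0 < M ∧
      (∀ x : E, x ≠ 0 → ‖fderiv ℝ (Hfun i₁ i₂ i₃) x‖ ≤ M / ‖x‖ ^ 2) ∧
      (∀ x : E, x ≠ 0 → ‖fderiv ℝ (fderiv ℝ (Hfun i₁ i₂ i₃)) x‖ ≤ M / ‖x‖ ^ 3) := by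
  have hsub : Metric.sphere (0:E) 1 ⊆ {x : E | x ≠ 0} := by
    intro x hx
    simp only [Metric.mem_sphere, dist_zero_right] at hx
    intro h; rw [h] at hx; simp at hx
  obtain ⟨M₁, hM₁⟩ := (isCompact_sphere (0:E) 1).exists_bound_of_continuousOn
    (((contDiffOn_fderiv_H i₁ i₂ i₃).continuousOn).mono hsub)
  obtain ⟨M₂, hM₂⟩ := (isCompact_sphere (0:E) 1).exists_bound_of_continuousOn
    (((contDiffOn_fderiv_H i₁ i₂ i₃).fderiv_of_isOpen (m := 0) isOpen_U (by norm_num)).continuousOn.mono hsub)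
  set M : ℝ := max (max M₁ M₂) 0 + 1 with hM
  have hMpos : 0 < M := by
    have h0 : (0:ℝ) ≤ max (max M₁ M₂) 0 := le_max_right _ _
    linarith
  have hM₁le : M₁ ≤ M := by
    have := le_max_left M₁ M₂
    have := le_max_left (max M₁ M₂) 0
    linarith
  have hM₂le : M₂ ≤ M := by
    have := le_max_right M₁ M₂
    have := le_max_left (max M₁ M₂) 0
    linarith
  refine ⟨M, hMpos, ?_, ?_⟩
  · intro x hx
    have hn : (0:ℝ) < ‖x‖ := norm_pos_iff.mpr hx
    set u : E := ‖x‖⁻¹ • x with hu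
    have hu1 : ‖u‖ = 1 := by
      rw [hu, norm_smul, Real.norm_eq_abs, abs_of_pos (by positivity)]
      field_simp
    have husphere : u ∈ Metric.sphere (0:E) 1 := by
      simp [Metric.mem_sphere, dist_zero_right, hu1]
    have hu0 : u ≠ 0 := fun h => by rw [h] at hu1; simp at hu1
    have hxu : x = ‖x‖ • u := by rw [hu, smul_smul]; field_simp; rw [one_smul]
    have key : fderiv ℝ (Hfun i₁ i₂ i₃) x
        = (‖x‖⁻¹ * ‖x‖⁻¹) • fderiv ℝ (Hfun i₁ i₂ i₃) u := by
      conv_lhs => rw [hxu]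
      exact fderiv_H_homog i₁ i₂ i₃ hn hu0
    rw [key]
    have hb : ‖fderiv ℝ (Hfun i₁ i₂ i₃) u‖ ≤ M := le_trans (hM₁ u husphere) hM₁le
    calc ‖(‖x‖⁻¹ * ‖x‖⁻¹) • fderiv ℝ (Hfun i₁ i₂ i₃) u‖
        ≤ |‖x‖⁻¹ * ‖x‖⁻¹| * ‖fderiv ℝ (Hfun i₁ i₂ i₃) u‖ := norm_smul_clm_le _ _
      _ = ‖x‖⁻¹ * ‖x‖⁻¹ * ‖fderiv ℝ (Hfun i₁ i₂ i₃) u‖ := by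
          rw [abs_of_pos (by positivity)]
      _ ≤ ‖x‖⁻¹ * ‖x‖⁻¹ * M := by
          have : (0:ℝ) ≤ ‖x‖⁻¹ * ‖x‖⁻¹ := by positivity
          exact mul_le_mul_of_nonneg_left hb this
      _ = M / ‖x‖ ^ 2 := by rw [pow_two, div_eq_mul_inv, mul_inv]; ring
  · intro x hx
    have hn : (0:ℝ) < ‖x‖ := norm_pos_iff.mpr hx
    set u : E := ‖x‖⁻¹ • x with hu
    have hu1 : ‖u‖ = 1 := by
      rw [hu, norm_smul, Real.norm_eq_abs, abs_of_pos (by positivity)]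
      field_simp
    have husphere : u ∈ Metric.sphere (0:E) 1 := by
      simp [Metric.mem_sphere, dist_zero_right, hu1]
    have hu0 : u ≠ 0 := fun h => by rw [h] at hu1; simp at hu1
    have hxu : x = ‖x‖ • u := by rw [hu, smul_smul]; field_simp; rw [one_smul]
    have key : fderiv ℝ (fderiv ℝ (Hfun i₁ i₂ i₃)) x
        = (‖x‖⁻¹ * ‖x‖⁻¹ * ‖x‖⁻¹) • fderiv ℝ (fderiv ℝ (Hfun i₁ i₂ i₃)) u := by
      conv_lhs => rw [hxu]
      exact fderiv2_H_homog i₁ i₂ i₃ hn hu0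
    rw [key]
    have hb : ‖fderiv ℝ (fderiv ℝ (Hfun i₁ i₂ i₃)) u‖ ≤ M := le_trans (hM₂ u husphere) hM₂le
    calc ‖(‖x‖⁻¹ * ‖x‖⁻¹ * ‖x‖⁻¹) • fderiv ℝ (fderiv ℝ (Hfun i₁ i₂ i₃)) u‖
        ≤ |‖x‖⁻¹ * ‖x‖⁻¹ * ‖x‖⁻¹| * ‖fderiv ℝ (fderiv ℝ (Hfun i₁ i₂ i₃)) u‖ := norm_smul_clm_le _ _
      _ = ‖x‖⁻¹ * ‖x‖⁻¹ * ‖x‖⁻¹ * ‖fderiv ℝ (fderiv ℝ (Hfun i₁ i₂ i₃)) u‖ := by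
          rw [abs_of_pos (by positivity)]
      _ ≤ ‖x‖⁻¹ * ‖x‖⁻¹ * ‖x‖⁻¹ * M := by
          have : (0:ℝ) ≤ ‖x‖⁻¹ * ‖x‖⁻¹ * ‖x‖⁻¹ := by positivity
          exact mul_le_mul_of_nonneg_left hb this
      _ = M / ‖x‖ ^ 3 := by
          rw [show (3:ℕ) = 2 + 1 from rfl, pow_succ, pow_two, div_eq_mul_inv, mul_inv, mul_inv]
          ring

lemma key (i₁ i₂ i₃ : Fin 2) :
    ∃ C > 0, ∀ A₁ A₂ : E, A₁ ≠ 0 → A₂ ≠ 0 →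
      |Hfun i₁ i₂ i₃ A₁ - Hfun i₁ i₂ i₃ A₂
          - fderiv ℝ (Hfun i₁ i₂ i₃) A₂ (A₁ - A₂)|
        ≤ C * (1 / ‖A₁‖ ^ 3 + 1 / ‖A₂‖ ^ 3) * ‖A₁ - A₂‖ ^ 2 := by
  obtain ⟨M, hMpos, hM1, hM2⟩ := exists_bounds i₁ i₂ i₃
  refine ⟨10 * M + 14, by positivity, ?_⟩
  set C : ℝ := 10 * M + 14 with hC
  have hCpos : 0 < C := by positivity
  have hC8M : 8 * M ≤ C := by linarith
  intro A₁ A₂ h₁ h₂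
  have hn₁ : (0:ℝ) < ‖A₁‖ := norm_pos_iff.mpr h₁
  have hn₂ : (0:ℝ) < ‖A₂‖ := norm_pos_iff.mpr h₂
  set d : ℝ := ‖A₁ - A₂‖ with hd
  have hd0 : 0 ≤ d := norm_nonneg _
  by_cases hcase : d ≤ ‖A₂‖ / 2
  · -- Taylor case
    set s : Set E := Metric.closedBall A₂ d with hs
    have hA₁s : A₁ ∈ s := by
      simp only [hs, Metric.mem_closedBall, dist_eq_norm]
      exact le_rfl
    have hA₂s : A₂ ∈ s := Metric.mem_closedBall_self hd0
    have hzball : ∀ z ∈ s, ‖A₂‖ / 2 ≤ ‖z‖ ∧ z ≠ 0 := by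
      intro z hz
      rw [hs, Metric.mem_closedBall, dist_eq_norm] at hz
      have h5 : ‖A₂‖ - ‖z‖ ≤ ‖z - A₂‖ := by
        have := norm_sub_norm_le A₂ z
        rwa [norm_sub_rev] at this
      have h6 : ‖A₂‖ / 2 ≤ ‖z‖ := by linarith
      refine ⟨h6, fun h => ?_⟩
      rw [h, norm_zero] at h6
      linarith
    set K : ℝ := 8 * M / ‖A₂‖ ^ 3 with hK
    have hK0 : 0 ≤ K := by positivity
    have hf'' : ∀ z ∈ s, ‖fderiv ℝ (fderiv ℝ (Hfun i₁ i₂ i₃)) z‖ ≤ K := by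
      intro z hz
      obtain ⟨hz1, hz0⟩ := hzball z hz
      have hzpos : (0:ℝ) < ‖z‖ := by linarith
      calc ‖fderiv ℝ (fderiv ℝ (Hfun i₁ i₂ i₃)) z‖ ≤ M / ‖z‖ ^ 3 := hM2 z hz0
        _ ≤ K := by
            rw [hK, div_le_div_iff₀ (by positivity) (by positivity)]
            have h3 : (‖A₂‖ / 2) ^ 3 ≤ ‖z‖ ^ 3 := by gcongr
            nlinarith [h3, hMpos]
    have hlip : ∀ z ∈ s, ‖fderiv ℝ (Hfun i₁ i₂ i₃) z - fderiv ℝ (Hfun i₁ i₂ i₃) A₂‖ ≤ K * d := by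
      intro z hz
      have h7 : ‖fderiv ℝ (Hfun i₁ i₂ i₃) z - fderiv ℝ (Hfun i₁ i₂ i₃) A₂‖ ≤ K * ‖z - A₂‖ :=
        Convex.norm_image_sub_le_of_norm_hasFDerivWithin_le
          (fun w hw => ((diffAt_fderiv_H i₁ i₂ i₃ (hzball w hw).2).hasFDerivAt).hasFDerivWithinAt)
          hf'' (convex_closedBall A₂ d) hA₂s hz
      have h8 : ‖z - A₂‖ ≤ d := by
        rw [hs, Metric.mem_closedBall, dist_eq_norm] at hz; exact hz
      calc ‖fderiv ℝ (Hfun i₁ i₂ i₃) z - fderiv ℝ (Hfun i₁ i₂ i₃) A₂‖ ≤ K * ‖z - A₂‖ := h7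
        _ ≤ K * d := by exact mul_le_mul_of_nonneg_left h8 hK0
    have hmain : ‖Hfun i₁ i₂ i₃ A₁ - Hfun i₁ i₂ i₃ A₂
        - fderiv ℝ (Hfun i₁ i₂ i₃) A₂ (A₁ - A₂)‖ ≤ (K * d) * ‖A₁ - A₂‖ :=
      Convex.norm_image_sub_le_of_norm_hasFDerivWithin_le'
        (fun w hw => ((diffAt_H i₁ i₂ i₃ (hzball w hw).2).hasFDerivAt).hasFDerivWithinAt)
        hlip (convex_closedBall A₂ d) hA₂s hA₁s
    rw [Real.norm_eq_abs] at hmain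
    calc |Hfun i₁ i₂ i₃ A₁ - Hfun i₁ i₂ i₃ A₂
        - fderiv ℝ (Hfun i₁ i₂ i₃) A₂ (A₁ - A₂)| ≤ K * d * d := hmain
      _ = (8 * M) * (1 / ‖A₂‖ ^ 3) * d ^ 2 := by rw [hK]; ring
      _ ≤ C * (1 / ‖A₁‖ ^ 3 + 1 / ‖A₂‖ ^ 3) * d ^ 2 := by
          have h9 : (8 * M) * (1 / ‖A₂‖ ^ 3) ≤ C * (1 / ‖A₁‖ ^ 3 + 1 / ‖A₂‖ ^ 3) := by
            have h10 : (8 * M) * (1 / ‖A₂‖ ^ 3) ≤ C * (1 / ‖A₂‖ ^ 3) :=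
              mul_le_mul_of_nonneg_right hC8M (by positivity)
            have h11 : (0:ℝ) ≤ C * (1 / ‖A₁‖ ^ 3) := by positivity
            nlinarith [h10, h11]
          exact mul_le_mul_of_nonneg_right h9 (by positivity)
  · -- far-apart case
    push_neg at hcase
    have hdpos : (0:ℝ) < d := by linarith
    have hb2d : ‖A₂‖ < 2 * d := by linarith
    have ha3d : ‖A₁‖ < 3 * d := by
      have := norm_sub_norm_le A₁ A₂
      linarith
    have t1 : |Hfun i₁ i₂ i₃ A₁| ≤ 9 * d ^ 2 / ‖A₁‖ ^ 3 := by
      calc |Hfun i₁ i₂ i₃ A₁| ≤ 1 / ‖A₁‖ := Hfun_abs_le i₁ i₂ i₃ A₁ h₁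
        _ ≤ 9 * d ^ 2 / ‖A₁‖ ^ 3 := by
            rw [div_le_div_iff₀ hn₁ (by positivity)]
            have hsq : ‖A₁‖ ^ 2 ≤ 9 * d ^ 2 := by nlinarith [ha3d, hn₁]
            nlinarith [mul_le_mul_of_nonneg_right hsq hn₁.le]
    have t2 : |Hfun i₁ i₂ i₃ A₂| ≤ 4 * d ^ 2 / ‖A₂‖ ^ 3 := by
      calc |Hfun i₁ i₂ i₃ A₂| ≤ 1 / ‖A₂‖ := Hfun_abs_le i₁ i₂ i₃ A₂ h₂
        _ ≤ 4 * d ^ 2 / ‖A₂‖ ^ 3 := by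
            rw [div_le_div_iff₀ hn₂ (by positivity)]
            have hsq : ‖A₂‖ ^ 2 ≤ 4 * d ^ 2 := by nlinarith [hb2d, hn₂]
            nlinarith [mul_le_mul_of_nonneg_right hsq hn₂.le]
    have t3 : |fderiv ℝ (Hfun i₁ i₂ i₃) A₂ (A₁ - A₂)| ≤ 2 * M * d ^ 2 / ‖A₂‖ ^ 3 := by
      have h12 : |fderiv ℝ (Hfun i₁ i₂ i₃) A₂ (A₁ - A₂)|
          ≤ ‖fderiv ℝ (Hfun i₁ i₂ i₃) A₂‖ * d := by
        have := (fderiv ℝ (Hfun i₁ i₂ i₃) A₂).le_opNorm (A₁ - A₂)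
        rwa [Real.norm_eq_abs] at this
      calc |fderiv ℝ (Hfun i₁ i₂ i₃) A₂ (A₁ - A₂)|
          ≤ ‖fderiv ℝ (Hfun i₁ i₂ i₃) A₂‖ * d := h12
        _ ≤ (M / ‖A₂‖ ^ 2) * d := mul_le_mul_of_nonneg_right (hM1 A₂ h₂) hd0
        _ ≤ 2 * M * d ^ 2 / ‖A₂‖ ^ 3 := by
            rw [div_mul_eq_mul_div, div_le_div_iff₀ (by positivity) (by positivity)]
            nlinarith [mul_le_mul_of_nonneg_left hb2d.le
              (by positivity : (0:ℝ) ≤ M * d * ‖A₂‖ ^ 2)]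
    have tri : |Hfun i₁ i₂ i₃ A₁ - Hfun i₁ i₂ i₃ A₂
        - fderiv ℝ (Hfun i₁ i₂ i₃) A₂ (A₁ - A₂)|
        ≤ |Hfun i₁ i₂ i₃ A₁| + |Hfun i₁ i₂ i₃ A₂|
          + |fderiv ℝ (Hfun i₁ i₂ i₃) A₂ (A₁ - A₂)| := by
      calc |Hfun i₁ i₂ i₃ A₁ - Hfun i₁ i₂ i₃ A₂ - fderiv ℝ (Hfun i₁ i₂ i₃) A₂ (A₁ - A₂)|
          ≤ |Hfun i₁ i₂ i₃ A₁ - Hfun i₁ i₂ i₃ A₂|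
            + |fderiv ℝ (Hfun i₁ i₂ i₃) A₂ (A₁ - A₂)| := abs_sub _ _
        _ ≤ |Hfun i₁ i₂ i₃ A₁| + |Hfun i₁ i₂ i₃ A₂|
            + |fderiv ℝ (Hfun i₁ i₂ i₃) A₂ (A₁ - A₂)| := by
            have := abs_sub (Hfun i₁ i₂ i₃ A₁) (Hfun i₁ i₂ i₃ A₂)
            linarith
    have hsum : 9 * d ^ 2 / ‖A₁‖ ^ 3 + 4 * d ^ 2 / ‖A₂‖ ^ 3 + 2 * M * d ^ 2 / ‖A₂‖ ^ 3
        ≤ C * (1 / ‖A₁‖ ^ 3 + 1 / ‖A₂‖ ^ 3) * d ^ 2 := by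
      have e1 : 9 * d ^ 2 / ‖A₁‖ ^ 3 ≤ C * d ^ 2 / ‖A₁‖ ^ 3 := by
        gcongr
        linarith
      have e2 : 4 * d ^ 2 / ‖A₂‖ ^ 3 + 2 * M * d ^ 2 / ‖A₂‖ ^ 3
          ≤ C * d ^ 2 / ‖A₂‖ ^ 3 := by
        rw [← add_div, div_le_div_iff₀ (by positivity) (by positivity)]
        nlinarith [mul_nonneg (mul_nonneg hMpos.le (sq_nonneg d)) (pow_pos hn₂ 3).le,
          mul_nonneg (sq_nonneg d) (pow_pos hn₂ 3).le]
      have e3 : C * (1 / ‖A₁‖ ^ 3 + 1 / ‖A₂‖ ^ 3) * d ^ 2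
          = C * d ^ 2 / ‖A₁‖ ^ 3 + C * d ^ 2 / ‖A₂‖ ^ 3 := by
        field_simp
      linarith
    linarith

end Stmt12Aux

/-- First-order Taylor remainder bound:
`|H(A₁) - H(A₂) - (A₁-A₂)·∇H(A₂)| ≤ C(1/|A₁|³ + 1/|A₂|³)|A₁-A₂|²`. -/
theorem stmt12 :
    ∃ C > 0, ∀ i₁ i₂ i₃ : Fin 2,
      ∀ A₁ A₂ : EuclideanSpace ℝ (Fin 2), A₁ ≠ 0 → A₂ ≠ 0 →
        |Hfun i₁ i₂ i₃ A₁ - Hfun i₁ i₂ i₃ A₂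
            - fderiv ℝ (Hfun i₁ i₂ i₃) A₂ (A₁ - A₂)|
          ≤ C * (1 / ‖A₁‖ ^ 3 + 1 / ‖A₂‖ ^ 3) * ‖A₁ - A₂‖ ^ 2 := by
  choose C hCpos hC using fun p : Fin 2 × Fin 2 × Fin 2 => Stmt12Aux.key p.1 p.2.1 p.2.2
  have hne : (Finset.univ : Finset (Fin 2 × Fin 2 × Fin 2)).Nonempty := Finset.univ_nonempty
  refine ⟨Finset.univ.sup' hne C, ?_, ?_⟩
  · exact lt_of_lt_of_le (hCpos ⟨0, 0, 0⟩) (Finset.le_sup' C (Finset.mem_univ _))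
  · intro i₁ i₂ i₃ A₁ A₂ h₁ h₂
    refine le_trans (hC (i₁, i₂, i₃) A₁ A₂ h₁ h₂) ?_
    have h1 : C (i₁, i₂, i₃) * (1 / ‖A₁‖ ^ 3 + 1 / ‖A₂‖ ^ 3)
        ≤ (Finset.univ.sup' hne C) * (1 / ‖A₁‖ ^ 3 + 1 / ‖A₂‖ ^ 3) :=
      mul_le_mul_of_nonneg_right (Finset.le_sup' C (Finset.mem_univ _)) (by positivity)
    exact mul_le_mul_of_nonneg_right h1 (by positivity)
end

section
/- Let H(x) = x_{i₁}x_{i₂}x_{i₃}/|x|⁴ on ℝ²∖{0}. For any nonzero A₁,A₂,A₃,A₄ ∈ ℝ², |(H(A₁)-H(A₂)) - (H(A₃)-H(A₄))| ≤ C(Σ_{j=1}^4 |A_j|^{-2})|(A₁-A₂)-(A₃-A₄)| + C(Σ_{j=1}^4 |A_j|^{-3})|A₃-A₄|(|A₃-A₁| + |A₄-A₂|). -/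
open Real

namespace Stmt13Aux

local notation "E2" => EuclideanSpace ℝ (Fin 2)

lemma coord_le_norm (x : E2) (i : Fin 2) : |x i| ≤ ‖x‖ := by
  rw [EuclideanSpace.norm_eq]
  rw [show |x i| = Real.sqrt ((x i) ^ 2) from (Real.sqrt_sq_eq_abs _).symm]
  apply Real.sqrt_le_sqrt
  have := Finset.single_le_sum (f := fun j => ‖x j‖ ^ 2) (fun j _ => by positivity)
    (Finset.mem_univ i)
  simpa [Real.norm_eq_abs, sq_abs] using this

lemma abs_H_le (i₁ i₂ i₃ : Fin 2) (x : E2) (hx : x ≠ 0) :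
    ‖Hfun i₁ i₂ i₃ x‖ ≤ 1 / ‖x‖ ^ 1 := by
  have hn : 0 < ‖x‖ := norm_pos_iff.mpr hx
  rw [Real.norm_eq_abs, Hfun, abs_div, abs_of_nonneg (by positivity : (0:ℝ) ≤ ‖x‖ ^ 4), pow_one]
  rw [div_le_div_iff₀ (by positivity) hn]
  have h1 := coord_le_norm x i₁
  have h2 := coord_le_norm x i₂
  have h3 := coord_le_norm x i₃
  have e1 := abs_nonneg (x i₁)
  have e2 := abs_nonneg (x i₂)
  have e3 := abs_nonneg (x i₃)
  calc |x i₁ * x i₂ * x i₃| * ‖x‖ = |x i₁| * |x i₂| * |x i₃| * ‖x‖ := by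
        rw [abs_mul, abs_mul]
    _ ≤ ‖x‖ * ‖x‖ * ‖x‖ * ‖x‖ := by gcongr
    _ = 1 * ‖x‖ ^ 4 := by ring

lemma contDiffAt_H (i₁ i₂ i₃ : Fin 2) {x : E2} (hx : x ≠ 0) :
    ContDiffAt ℝ 3 (Hfun i₁ i₂ i₃) x := by
  have hnum : ContDiff ℝ 3 (fun x : E2 => x i₁ * x i₂ * x i₃) :=
    (((EuclideanSpace.proj i₁ : E2 →L[ℝ] ℝ).contDiff.mul
      (EuclideanSpace.proj i₂ : E2 →L[ℝ] ℝ).contDiff).mul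
      (EuclideanSpace.proj i₃ : E2 →L[ℝ] ℝ).contDiff)
  have hden : ContDiff ℝ 3 (fun x : E2 => ‖x‖ ^ 4) := by
    have h2 : ContDiff ℝ 3 (fun x : E2 => ‖x‖ ^ 2) := contDiff_norm_sq ℝ
    have := h2.pow 2
    simpa [← pow_mul] using this
  have hne : ‖x‖ ^ 4 ≠ 0 := pow_ne_zero 4 (norm_ne_zero_iff.mpr hx)
  exact hnum.contDiffAt.div hden.contDiffAt hne

lemma H_smul (i₁ i₂ i₃ : Fin 2) (c : ℝ) (hc : 0 < c) (x : E2) (hx : x ≠ 0) :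
    Hfun i₁ i₂ i₃ (c • x) = (c ^ 1)⁻¹ • Hfun i₁ i₂ i₃ x := by
  have hn : ‖x‖ ≠ 0 := norm_ne_zero_iff.mpr hx
  have hc' : c ≠ 0 := ne_of_gt hc
  unfold Hfun
  rw [norm_smul]
  simp only [PiLp.smul_apply, smul_eq_mul, Real.norm_eq_abs, abs_of_pos hc, pow_one]
  rw [mul_pow]
  field_simp



variable {F : Type*} [NormedAddCommGroup F] [NormedSpace ℝ F]

lemma homog_fderiv (f : E2 → F) (k : ℕ)
    (hdiff : ∀ x : E2, x ≠ 0 → DifferentiableAt ℝ f x)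
    (hhom : ∀ c : ℝ, 0 < c → ∀ x : E2, x ≠ 0 → f (c • x) = (c ^ k)⁻¹ • f x) :
    ∀ c : ℝ, 0 < c → ∀ x : E2, x ≠ 0 →
      fderiv ℝ f (c • x) = (c ^ (k + 1))⁻¹ • fderiv ℝ f x := by
  intro c hc x hx
  have hc' : c ≠ 0 := ne_of_gt hc
  have hcx : c • x ≠ 0 := smul_ne_zero hc' hx
  have hsmul : HasFDerivAt (fun y : E2 => c • y) (c • ContinuousLinearMap.id ℝ E2) x := by
    exact (c • ContinuousLinearMap.id ℝ E2).hasFDerivAt (x := x)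
  have h1 : HasFDerivAt (fun y : E2 => f (c • y))
      ((fderiv ℝ f (c • x)).comp (c • ContinuousLinearMap.id ℝ E2)) x :=
    ((hdiff _ hcx).hasFDerivAt).comp x hsmul
  have h2 : HasFDerivAt (fun y : E2 => f (c • y)) ((c ^ k)⁻¹ • fderiv ℝ f x) x := by
    have hbase : HasFDerivAt (fun y : E2 => (c ^ k)⁻¹ • f y) ((c ^ k)⁻¹ • fderiv ℝ f x) x :=
      ((hdiff x hx).hasFDerivAt).const_smul _
    apply hbase.congr_of_eventuallyEq
    have hmem : {y : E2 | y ≠ 0} ∈ nhds x := isOpen_ne.mem_nhds hx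
    filter_upwards [hmem] with y hy
    exact hhom c hc y hy
  have heq := h1.unique h2
  ext v
  have := congrArg (fun (T : E2 →L[ℝ] F) => T v) heq
  simp only [ContinuousLinearMap.coe_comp', Function.comp_apply, ContinuousLinearMap.smul_apply,
    ContinuousLinearMap.coe_smul', Pi.smul_apply, ContinuousLinearMap.coe_id', id_eq] at this ⊢
  have h3 : fderiv ℝ f (c • x) (c • v) = (c ^ k)⁻¹ • fderiv ℝ f x v := this
  rw [map_smul] at h3
  have : fderiv ℝ f (c • x) v = c⁻¹ • ((c ^ k)⁻¹ • fderiv ℝ f x v) := by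
    rw [← h3, smul_smul, inv_mul_cancel₀ hc', one_smul]
  rw [this, smul_smul, ← mul_inv, ← pow_succ']

lemma homog_bound (f : E2 → F) (k : ℕ)
    (hcont : ContinuousOn f {x : E2 | x ≠ 0})
    (hhom : ∀ c : ℝ, 0 < c → ∀ x : E2, x ≠ 0 → f (c • x) = (c ^ k)⁻¹ • f x) :
    ∃ K : ℝ, 0 < K ∧ ∀ x : E2, x ≠ 0 → ‖f x‖ ≤ K / ‖x‖ ^ k := by
  have hsub : Metric.sphere (0 : E2) 1 ⊆ {x : E2 | x ≠ 0} := by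
    intro z hz
    simp only [Metric.mem_sphere, dist_zero_right] at hz
    simp only [Set.mem_setOf_eq]
    intro h0
    rw [h0] at hz; simp at hz
  obtain ⟨K, hK⟩ := (isCompact_sphere (0 : E2) 1).exists_bound_of_continuousOn
    (hcont.mono hsub)
  refine ⟨max K 1, lt_of_lt_of_le one_pos (le_max_right _ _), ?_⟩
  intro x hx
  have hn : 0 < ‖x‖ := norm_pos_iff.mpr hx
  set u : E2 := ‖x‖⁻¹ • x with hu_def
  have hu_norm : ‖u‖ = 1 := by
    rw [hu_def, norm_smul, norm_inv, norm_norm, inv_mul_cancel₀ (ne_of_gt hn)]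
  have hu_sphere : u ∈ Metric.sphere (0 : E2) 1 := by
    simp [Metric.mem_sphere, dist_zero_right, hu_norm]
  have hu_ne : u ≠ 0 := by
    intro h0; rw [h0] at hu_norm; simp at hu_norm
  have hxu : x = ‖x‖ • u := by
    rw [hu_def, smul_smul, mul_inv_cancel₀ (ne_of_gt hn), one_smul]
  have : ‖f x‖ = (‖x‖ ^ k)⁻¹ * ‖f u‖ := by
    conv_lhs => rw [hxu]
    rw [hhom ‖x‖ hn u hu_ne, norm_smul, Real.norm_eq_abs, abs_of_nonneg (by positivity)]
  rw [this, div_eq_mul_inv, mul_comm (max K 1)]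
  exact mul_le_mul_of_nonneg_left (le_trans (hK u hu_sphere) (le_max_left _ _))
    (by positivity)

lemma homog_lip (f : E2 → F) (k : ℕ) (B0 B1 : ℝ) (hB0 : 0 ≤ B0) (hB1 : 0 ≤ B1)
    (hdiff : ∀ x : E2, x ≠ 0 → DifferentiableAt ℝ f x)
    (hb0 : ∀ x : E2, x ≠ 0 → ‖f x‖ ≤ B0 / ‖x‖ ^ k)
    (hb1 : ∀ x : E2, x ≠ 0 → ‖fderiv ℝ f x‖ ≤ B1 / ‖x‖ ^ (k + 1)) :
    ∀ x y : E2, x ≠ 0 → y ≠ 0 →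
      ‖f x - f y‖ ≤ (3 * B0 + 2 ^ (k + 1) * B1) * (1 / ‖x‖ ^ (k + 1) + 1 / ‖y‖ ^ (k + 1))
        * ‖x - y‖ := by
  intro x y hx hy
  have ha : 0 < ‖x‖ := norm_pos_iff.mpr hx
  have hb : 0 < ‖y‖ := norm_pos_iff.mpr hy
  have hC0 : (0:ℝ) ≤ 3 * B0 + 2 ^ (k + 1) * B1 := by positivity
  by_cases hcase : ‖x - y‖ < ‖y‖ / 2
  · -- MVT on the ball around y of radius ‖y‖/2
    set s : Set E2 := Metric.ball y (‖y‖ / 2) with hs_def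
    have hzs : ∀ z ∈ s, ‖y‖ / 2 ≤ ‖z‖ := by
      intro z hz
      rw [hs_def, Metric.mem_ball, dist_eq_norm] at hz
      have := norm_sub_norm_le y (y - z)
      simp only [sub_sub_cancel] at this
      rw [norm_sub_rev] at hz
      linarith
    have hzne : ∀ z ∈ s, z ≠ 0 := by
      intro z hz h0
      have := hzs z hz
      rw [h0, norm_zero] at this
      linarith
    have hbound : ∀ z ∈ s, ‖fderiv ℝ f z‖ ≤ 2 ^ (k + 1) * B1 / ‖y‖ ^ (k + 1) := by
      intro z hz
      have hz0 : (0:ℝ) < ‖z‖ := lt_of_lt_of_le (by positivity) (hzs z hz)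
      refine le_trans (hb1 z (hzne z hz)) ?_
      rw [div_le_div_iff₀ (pow_pos hz0 (k+1)) (by positivity)]
      calc B1 * ‖y‖ ^ (k + 1) = B1 * 2 ^ (k+1) * (‖y‖ / 2) ^ (k + 1) := by
            rw [div_pow]; field_simp
        _ ≤ B1 * 2 ^ (k+1) * ‖z‖ ^ (k + 1) :=
            mul_le_mul_of_nonneg_left
              (pow_le_pow_left₀ (by positivity) (hzs z hz) _) (by positivity)
        _ = 2 ^ (k + 1) * B1 * ‖z‖ ^ (k + 1) := by ring
    have hxs : x ∈ s := by
      rw [hs_def, Metric.mem_ball, dist_eq_norm]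
      exact hcase
    have hys : y ∈ s := by
      rw [hs_def, Metric.mem_ball, dist_self]
      positivity
    have := (convex_ball y (‖y‖ / 2)).norm_image_sub_le_of_norm_fderiv_le
      (fun z hz => hdiff z (hzne z hz)) hbound hys hxs
    calc ‖f x - f y‖ ≤ 2 ^ (k + 1) * B1 / ‖y‖ ^ (k + 1) * ‖x - y‖ := this
      _ ≤ (3 * B0 + 2 ^ (k + 1) * B1) * (1 / ‖x‖ ^ (k + 1) + 1 / ‖y‖ ^ (k + 1)) * ‖x - y‖ := by
          gcongr ?_ * ‖x - y‖
          calc (2:ℝ) ^ (k + 1) * B1 / ‖y‖ ^ (k + 1)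
              = 2 ^ (k + 1) * B1 * (1 / ‖y‖ ^ (k + 1)) := by ring
            _ ≤ (3 * B0 + 2 ^ (k + 1) * B1) * (1 / ‖x‖ ^ (k + 1) + 1 / ‖y‖ ^ (k + 1)) := by
                apply mul_le_mul (by nlinarith)
                  (le_add_of_nonneg_left (by positivity)) (by positivity) hC0
  · push_neg at hcase
    have h2 : ‖y‖ ≤ 2 * ‖x - y‖ := by linarith
    have h3 : ‖x‖ ≤ 3 * ‖x - y‖ := by
      have := norm_sub_norm_le x y
      linarith
    have h3' : ‖y‖ ≤ 3 * ‖x - y‖ := by linarith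
    have far : ∀ a : ℝ, 0 < a → a ≤ 3 * ‖x - y‖ →
        B0 / a ^ k ≤ 3 * B0 * (1 / a ^ (k + 1)) * ‖x - y‖ := by
      intro a ha0 ha3
      rw [show 3 * B0 * (1 / a ^ (k + 1)) * ‖x - y‖ = 3 * B0 * ‖x - y‖ / a ^ (k + 1) from by
        ring]
      rw [div_le_div_iff₀ (pow_pos ha0 k) (pow_pos ha0 (k + 1)), pow_succ]
      nlinarith [pow_nonneg ha0.le k, norm_nonneg (x - y),
        mul_le_mul_of_nonneg_left ha3 (mul_nonneg hB0 (pow_nonneg ha0.le k))]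
    calc ‖f x - f y‖ ≤ ‖f x‖ + ‖f y‖ := norm_sub_le _ _
      _ ≤ B0 / ‖x‖ ^ k + B0 / ‖y‖ ^ k := add_le_add (hb0 x hx) (hb0 y hy)
      _ ≤ 3 * B0 * (1 / ‖x‖ ^ (k + 1)) * ‖x - y‖
          + 3 * B0 * (1 / ‖y‖ ^ (k + 1)) * ‖x - y‖ :=
        add_le_add (far _ ha h3) (far _ hb h3')
      _ = 3 * B0 * (1 / ‖x‖ ^ (k + 1) + 1 / ‖y‖ ^ (k + 1)) * ‖x - y‖ := by ring
      _ ≤ (3 * B0 + 2 ^ (k + 1) * B1) * (1 / ‖x‖ ^ (k + 1) + 1 / ‖y‖ ^ (k + 1)) * ‖x - y‖ := by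
        have hS : (0:ℝ) ≤ 1 / ‖x‖ ^ (k + 1) + 1 / ‖y‖ ^ (k + 1) := by positivity
        have : (3:ℝ) * B0 ≤ 3 * B0 + 2 ^ (k + 1) * B1 :=
          le_add_of_nonneg_right (by positivity)
        exact mul_le_mul_of_nonneg_right
          (mul_le_mul_of_nonneg_right this hS) (norm_nonneg _)


lemma aux_sq {a b t : ℝ} (ha : 0 < a) (hb : 0 < b) (hbt : b ≤ t) :
    1 / a ^ 2 ≤ t * (1 / a ^ 3 + 1 / b ^ 3) := by
  rcases le_total a t with h | h
  · have h1 : 1 / a ^ 2 ≤ t * (1 / a ^ 3) := by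
      rw [mul_one_div, div_le_div_iff₀ (by positivity) (by positivity)]
      nlinarith [pow_pos ha 2]
    nlinarith [mul_pos (lt_of_lt_of_le hb hbt) (by positivity : (0:ℝ) < 1 / b ^ 3)]
  · have hba : b ≤ a := le_trans hbt h
    have h1 : 1 / a ^ 2 ≤ 1 / b ^ 2 := by
      apply div_le_div_of_nonneg_left (by norm_num) (by positivity)
      exact pow_le_pow_left₀ hb.le hba 2
    have h2 : 1 / b ^ 2 ≤ t * (1 / b ^ 3) := by
      rw [mul_one_div, div_le_div_iff₀ (by positivity) (by positivity)]
      nlinarith [pow_pos hb 2]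
    nlinarith [mul_pos (lt_of_lt_of_le hb hbt) (by positivity : (0:ℝ) < 1 / a ^ 3)]

lemma S2_bound {a1 a2 a3 a4 t : ℝ} (h1 : 0 < a1) (h2 : 0 < a2) (h3 : 0 < a3) (h4 : 0 < a4)
    (ht : a4 ≤ t) :
    1/a1^2 + 1/a2^2 + 1/a3^2 + 1/a4^2 ≤ 5 * t * (1/a1^3 + 1/a2^3 + 1/a3^3 + 1/a4^3) := by
  have e1 := aux_sq h1 h4 ht
  have e2 := aux_sq h2 h4 ht
  have e3 := aux_sq h3 h4 ht
  have e4 := aux_sq h4 h4 ht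
  have ht0 : 0 ≤ t := le_trans h4.le ht
  nlinarith [mul_nonneg ht0 (by positivity : (0:ℝ) ≤ 1/a1^3),
    mul_nonneg ht0 (by positivity : (0:ℝ) ≤ 1/a2^3),
    mul_nonneg ht0 (by positivity : (0:ℝ) ≤ 1/a3^3),
    mul_nonneg ht0 (by positivity : (0:ℝ) ≤ 1/a4^3)]
set_option maxHeartbeats 3200000 in
lemma key (i₁ i₂ i₃ : Fin 2) :
    ∃ C : ℝ, 0 < C ∧ ∀ A₁ A₂ A₃ A₄ : E2, A₁ ≠ 0 → A₂ ≠ 0 → A₃ ≠ 0 → A₄ ≠ 0 →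
      |(Hfun i₁ i₂ i₃ A₁ - Hfun i₁ i₂ i₃ A₂) - (Hfun i₁ i₂ i₃ A₃ - Hfun i₁ i₂ i₃ A₄)|
        ≤ C * (1 / ‖A₁‖ ^ 2 + 1 / ‖A₂‖ ^ 2 + 1 / ‖A₃‖ ^ 2 + 1 / ‖A₄‖ ^ 2)
            * ‖(A₁ - A₂) - (A₃ - A₄)‖
          + C * (1 / ‖A₁‖ ^ 3 + 1 / ‖A₂‖ ^ 3 + 1 / ‖A₃‖ ^ 3 + 1 / ‖A₄‖ ^ 3)
            * ‖A₃ - A₄‖ * (‖A₃ - A₁‖ + ‖A₄ - A₂‖) := by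
  set H := Hfun i₁ i₂ i₃ with hHdef
  have hCD : ∀ x : E2, x ≠ 0 → ContDiffAt ℝ 3 H x := fun x hx => contDiffAt_H i₁ i₂ i₃ hx
  have hdiff : ∀ x : E2, x ≠ 0 → DifferentiableAt ℝ H x := fun x hx =>
    (hCD x hx).differentiableAt (by norm_num)
  have hom0 : ∀ c : ℝ, 0 < c → ∀ x : E2, x ≠ 0 → H (c • x) = (c ^ 1)⁻¹ • H x :=
    fun c hc x hx => H_smul i₁ i₂ i₃ c hc x hx
  set g := fderiv ℝ H with hgdef
  have hom1 : ∀ c : ℝ, 0 < c → ∀ x : E2, x ≠ 0 → g (c • x) = (c ^ (1 + 1))⁻¹ • g x :=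
    homog_fderiv H 1 hdiff hom0
  have hgCD : ∀ x : E2, x ≠ 0 → ContDiffAt ℝ 2 g x := fun x hx =>
    (hCD x hx).fderiv_right (by norm_num)
  have hdiffg : ∀ x : E2, x ≠ 0 → DifferentiableAt ℝ g x := fun x hx =>
    (hgCD x hx).differentiableAt (by norm_num)
  have hom2 : ∀ c : ℝ, 0 < c → ∀ x : E2, x ≠ 0 →
      fderiv ℝ g (c • x) = (c ^ (1 + 1 + 1))⁻¹ • fderiv ℝ g x :=
    homog_fderiv g (1 + 1) hdiffg hom1
  have hcontg : ContinuousOn g {x : E2 | x ≠ 0} := fun x hx =>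
    ((hgCD x hx).continuousAt).continuousWithinAt
  have hcontg2 : ContinuousOn (fderiv ℝ g) {x : E2 | x ≠ 0} := by
    intro x hx
    exact (((hgCD x hx).fderiv_right (m := 1) (by norm_num)).continuousAt).continuousWithinAt
  obtain ⟨K1, hK1pos, hK1⟩ := homog_bound g (1 + 1) hcontg hom1
  obtain ⟨K2, hK2pos, hK2⟩ := homog_bound (fderiv ℝ g) (1 + 1 + 1) hcontg2 hom2
  have hK1' : ∀ x : E2, x ≠ 0 → ‖g x‖ ≤ K1 / ‖x‖ ^ 2 := by
    intro x hx; have := hK1 x hx; norm_num at this; exact this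
  have hK2' : ∀ x : E2, x ≠ 0 → ‖fderiv ℝ g x‖ ≤ K2 / ‖x‖ ^ 3 := by
    intro x hx; have := hK2 x hx; norm_num at this; exact this
  have lipH : ∀ x y : E2, x ≠ 0 → y ≠ 0 →
      ‖H x - H y‖ ≤ (3 + 4 * K1) * (1 / ‖x‖ ^ 2 + 1 / ‖y‖ ^ 2) * ‖x - y‖ := by
    intro x y hx hy
    have := homog_lip H 1 1 K1 zero_le_one hK1pos.le hdiff
      (fun z hz => abs_H_le i₁ i₂ i₃ z hz) hK1 x y hx hy
    norm_num [one_div] at this ⊢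
    exact this
  have lipG : ∀ x y : E2, x ≠ 0 → y ≠ 0 →
      ‖g x - g y‖ ≤ (3 * K1 + 8 * K2) * (1 / ‖x‖ ^ 3 + 1 / ‖y‖ ^ 3) * ‖x - y‖ := by
    intro x y hx hy
    have := homog_lip g 2 K1 K2 hK1pos.le hK2pos.le hdiffg hK1'
      (fun z hz => by norm_num; exact hK2' z hz) x y hx hy
    norm_num [one_div] at this ⊢
    exact this
  set LH := 3 + 4 * K1 with hLH
  set LG := 3 * K1 + 8 * K2 with hLG
  have hLHpos : 0 < LH := by rw [hLH]; linarith
  have hLGpos : 0 < LG := by rw [hLG]; linarith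
  refine ⟨4 * K1 + 8 * LG + 40 * LH + 1, by linarith, ?_⟩
  set C := 4 * K1 + 8 * LG + 40 * LH + 1 with hC
  have hC4K1 : 4 * K1 ≤ C := by rw [hC]; linarith
  have hC8LG : 8 * LG ≤ C := by rw [hC]; linarith
  have hC40LH : 40 * LH ≤ C := by rw [hC]; linarith
  have hCpos : 0 < C := by rw [hC]; linarith
  intro A₁ A₂ A₃ A₄ h1 h2 h3 h4
  have a1 : 0 < ‖A₁‖ := norm_pos_iff.mpr h1
  have a2 : 0 < ‖A₂‖ := norm_pos_iff.mpr h2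
  have a3 : 0 < ‖A₃‖ := norm_pos_iff.mpr h3
  have a4 : 0 < ‖A₄‖ := norm_pos_iff.mpr h4
  set d := ‖A₁ - A₂ - (A₃ - A₄)‖ with hd
  set e := ‖A₃ - A₄‖ with he
  set p := ‖A₃ - A₁‖ with hp
  set q := ‖A₄ - A₂‖ with hq
  set r := ‖A₁ - A₂‖ with hr
  set S2 := 1 / ‖A₁‖ ^ 2 + 1 / ‖A₂‖ ^ 2 + 1 / ‖A₃‖ ^ 2 + 1 / ‖A₄‖ ^ 2 with hS2def
  set S3 := 1 / ‖A₁‖ ^ 3 + 1 / ‖A₂‖ ^ 3 + 1 / ‖A₃‖ ^ 3 + 1 / ‖A₄‖ ^ 3 with hS3def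
  have hS2pos : 0 < S2 := by
    rw [hS2def]
    have u1 := one_div_pos.mpr (pow_pos a1 2)
    have u2 := one_div_pos.mpr (pow_pos a2 2)
    have u3 := one_div_pos.mpr (pow_pos a3 2)
    have u4 := one_div_pos.mpr (pow_pos a4 2)
    linarith
  have hS3pos : 0 < S3 := by
    rw [hS3def]
    have u1 := one_div_pos.mpr (pow_pos a1 3)
    have u2 := one_div_pos.mpr (pow_pos a2 3)
    have u3 := one_div_pos.mpr (pow_pos a3 3)
    have u4 := one_div_pos.mpr (pow_pos a4 3)
    linarith
  have hS2_13 : 1 / ‖A₁‖ ^ 2 + 1 / ‖A₃‖ ^ 2 ≤ S2 := by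
    rw [hS2def]
    have u1 : (0:ℝ) ≤ 1 / ‖A₂‖ ^ 2 := by positivity
    have u2 : (0:ℝ) ≤ 1 / ‖A₄‖ ^ 2 := by positivity
    linarith
  have hS2_24 : 1 / ‖A₂‖ ^ 2 + 1 / ‖A₄‖ ^ 2 ≤ S2 := by
    rw [hS2def]
    have u1 : (0:ℝ) ≤ 1 / ‖A₁‖ ^ 2 := by positivity
    have u2 : (0:ℝ) ≤ 1 / ‖A₃‖ ^ 2 := by positivity
    linarith
  have hS2_12 : 1 / ‖A₁‖ ^ 2 + 1 / ‖A₂‖ ^ 2 ≤ S2 := by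
    rw [hS2def]
    have u1 : (0:ℝ) ≤ 1 / ‖A₃‖ ^ 2 := by positivity
    have u2 : (0:ℝ) ≤ 1 / ‖A₄‖ ^ 2 := by positivity
    linarith
  have hS2_34 : 1 / ‖A₃‖ ^ 2 + 1 / ‖A₄‖ ^ 2 ≤ S2 := by
    rw [hS2def]
    have u1 : (0:ℝ) ≤ 1 / ‖A₁‖ ^ 2 := by positivity
    have u2 : (0:ℝ) ≤ 1 / ‖A₂‖ ^ 2 := by positivity
    linarith
  have hS3_24 : 1 / ‖A₂‖ ^ 3 + 1 / ‖A₄‖ ^ 3 ≤ S3 := by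
    rw [hS3def]
    have u1 : (0:ℝ) ≤ 1 / ‖A₁‖ ^ 3 := by positivity
    have u2 : (0:ℝ) ≤ 1 / ‖A₃‖ ^ 3 := by positivity
    linarith
  have hd0 : 0 ≤ d := norm_nonneg _
  have he0 : 0 ≤ e := norm_nonneg _
  have hp0 : 0 ≤ p := norm_nonneg _
  have hq0 : 0 ≤ q := norm_nonneg _
  have hr0 : 0 ≤ r := norm_nonneg _
  -- rewrite goal using norms
  rw [← Real.norm_eq_abs]
  -- triangle facts
  have hr_de : r ≤ d + e := by
    rw [hr, hd, he]
    calc ‖A₁ - A₂‖ = ‖(A₁ - A₂ - (A₃ - A₄)) + (A₃ - A₄)‖ := by abel_nf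
      _ ≤ ‖A₁ - A₂ - (A₃ - A₄)‖ + ‖A₃ - A₄‖ := norm_add_le _ _
  have hr_pqe : r ≤ p + e + q := by
    rw [hr, hp, he, hq]
    calc ‖A₁ - A₂‖ = ‖(-(A₃ - A₁)) + (A₃ - A₄) + (A₄ - A₂)‖ := by abel_nf
      _ ≤ ‖(-(A₃ - A₁))‖ + ‖A₃ - A₄‖ + ‖A₄ - A₂‖ :=
          le_trans (norm_add_le _ _) (by gcongr; exact norm_add_le _ _)
      _ = p + e + q := by rw [norm_neg]
  -- Bound (I): pairing (A₁,A₃), (A₂,A₄)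
  have boundI : ‖H A₁ - H A₂ - (H A₃ - H A₄)‖ ≤ LH * S2 * p + LH * S2 * q := by
    have e13 := lipH A₁ A₃ h1 h3
    have e24 := lipH A₂ A₄ h2 h4
    rw [show ‖A₁ - A₃‖ = p from by rw [hp, norm_sub_rev]] at e13
    rw [show ‖A₂ - A₄‖ = q from by rw [hq, norm_sub_rev]] at e24
    calc ‖H A₁ - H A₂ - (H A₃ - H A₄)‖ = ‖(H A₁ - H A₃) - (H A₂ - H A₄)‖ := by
          rw [show H A₁ - H A₂ - (H A₃ - H A₄) = (H A₁ - H A₃) - (H A₂ - H A₄) from by ring]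
      _ ≤ ‖H A₁ - H A₃‖ + ‖H A₂ - H A₄‖ := norm_sub_le _ _
      _ ≤ LH * (1 / ‖A₁‖ ^ 2 + 1 / ‖A₃‖ ^ 2) * p + LH * (1 / ‖A₂‖ ^ 2 + 1 / ‖A₄‖ ^ 2) * q :=
          add_le_add e13 e24
      _ ≤ LH * S2 * p + LH * S2 * q :=
          add_le_add
            (mul_le_mul_of_nonneg_right (mul_le_mul_of_nonneg_left hS2_13 hLHpos.le) hp0)
            (mul_le_mul_of_nonneg_right (mul_le_mul_of_nonneg_left hS2_24 hLHpos.le) hq0)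
  -- Bound (II): pairing (A₁,A₂), (A₃,A₄)
  have boundII : ‖H A₁ - H A₂ - (H A₃ - H A₄)‖ ≤ LH * S2 * (d + e) + LH * S2 * e := by
    have e12 := lipH A₁ A₂ h1 h2
    have e34 := lipH A₃ A₄ h3 h4
    calc ‖H A₁ - H A₂ - (H A₃ - H A₄)‖ ≤ ‖H A₁ - H A₂‖ + ‖H A₃ - H A₄‖ := norm_sub_le _ _
      _ ≤ LH * (1 / ‖A₁‖ ^ 2 + 1 / ‖A₂‖ ^ 2) * r + LH * (1 / ‖A₃‖ ^ 2 + 1 / ‖A₄‖ ^ 2) * e :=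
          add_le_add e12 e34
      _ ≤ LH * S2 * (d + e) + LH * S2 * e := by
          have t1 : LH * (1 / ‖A₁‖ ^ 2 + 1 / ‖A₂‖ ^ 2) * r ≤ LH * S2 * (d + e) :=
            mul_le_mul (mul_le_mul_of_nonneg_left hS2_12 hLHpos.le) hr_de hr0
              (mul_nonneg hLHpos.le hS2pos.le)
          have t2 : LH * (1 / ‖A₃‖ ^ 2 + 1 / ‖A₄‖ ^ 2) * e ≤ LH * S2 * e :=
            mul_le_mul_of_nonneg_right (mul_le_mul_of_nonneg_left hS2_34 hLHpos.le) he0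
          linarith
  rcases le_or_gt ‖A₄‖ (2 * e) with hc1 | hc1
  · -- degenerate case: ‖A₄‖ ≤ 2e
    have hS2le : S2 ≤ 5 * (2 * e) * S3 := by
      rw [hS2def, hS3def]; exact S2_bound a1 a2 a3 a4 hc1
    have h10 : 10 * LH ≤ C := by linarith only [hC40LH, hLHpos]
    have hnn : (0:ℝ) ≤ S3 * e * (p + q) := by
      apply mul_nonneg (mul_nonneg hS3pos.le he0) (add_nonneg hp0 hq0)
    have step : LH * S2 * p + LH * S2 * q ≤ C * S3 * e * (p + q) := by
      have t1 : LH * S2 * p ≤ LH * (5 * (2 * e) * S3) * p :=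
        mul_le_mul_of_nonneg_right (mul_le_mul_of_nonneg_left hS2le hLHpos.le) hp0
      have t2 : LH * S2 * q ≤ LH * (5 * (2 * e) * S3) * q :=
        mul_le_mul_of_nonneg_right (mul_le_mul_of_nonneg_left hS2le hLHpos.le) hq0
      have t3 : LH * (5 * (2 * e) * S3) * p + LH * (5 * (2 * e) * S3) * q
          = 10 * LH * (S3 * e * (p + q)) := by ring
      have t4 : 10 * LH * (S3 * e * (p + q)) ≤ C * (S3 * e * (p + q)) :=
        mul_le_mul_of_nonneg_right h10 hnn
      have t5 : C * (S3 * e * (p + q)) = C * S3 * e * (p + q) := by ring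
      linarith only [t1, t2, t3, t4, t5]
    have hnn2 : (0:ℝ) ≤ C * S2 * d := by
      apply mul_nonneg (mul_nonneg hCpos.le hS2pos.le) hd0
    linarith only [boundI, step, hnn2]
  rcases le_or_gt ‖A₂‖ (4 * e) with hc2 | hc2
  · -- degenerate case: ‖A₂‖ ≤ 4e
    have hS2le : S2 ≤ 5 * (4 * e) * S3 := by
      rw [hS2def, hS3def]
      have := S2_bound a1 a3 a4 a2 hc2
      linarith only [this]
    have h20 : 20 * LH ≤ C := by linarith only [hC40LH, hLHpos]
    have hnn : (0:ℝ) ≤ S3 * e * (p + q) := by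
      apply mul_nonneg (mul_nonneg hS3pos.le he0) (add_nonneg hp0 hq0)
    have step : LH * S2 * p + LH * S2 * q ≤ C * S3 * e * (p + q) := by
      have t1 : LH * S2 * p ≤ LH * (5 * (4 * e) * S3) * p :=
        mul_le_mul_of_nonneg_right (mul_le_mul_of_nonneg_left hS2le hLHpos.le) hp0
      have t2 : LH * S2 * q ≤ LH * (5 * (4 * e) * S3) * q :=
        mul_le_mul_of_nonneg_right (mul_le_mul_of_nonneg_left hS2le hLHpos.le) hq0
      have t3 : LH * (5 * (4 * e) * S3) * p + LH * (5 * (4 * e) * S3) * q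
          = 20 * LH * (S3 * e * (p + q)) := by ring
      have t4 : 20 * LH * (S3 * e * (p + q)) ≤ C * (S3 * e * (p + q)) :=
        mul_le_mul_of_nonneg_right h20 hnn
      have t5 : C * (S3 * e * (p + q)) = C * S3 * e * (p + q) := by ring
      linarith only [t1, t2, t3, t4, t5]
    have hnn2 : (0:ℝ) ≤ C * S2 * d := by
      apply mul_nonneg (mul_nonneg hCpos.le hS2pos.le) hd0
    linarith only [boundI, step, hnn2]
  rcases le_or_gt ‖A₂‖ (2 * r) with hc3 | hc3
  · -- degenerate case: ‖A₂‖ ≤ 2r but e small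
    have hpq : ‖A₂‖ ≤ 4 * (p + q) := by linarith only [hr_pqe, hc2, hc3]
    have hS2le : S2 ≤ 5 * (4 * (p + q)) * S3 := by
      rw [hS2def, hS3def]
      have := S2_bound a1 a3 a4 a2 hpq
      linarith only [this]
    have hnn : (0:ℝ) ≤ S3 * e * (p + q) := by
      apply mul_nonneg (mul_nonneg hS3pos.le he0) (add_nonneg hp0 hq0)
    have t1 : LH * S2 * d ≤ C * S2 * d := by
      apply mul_le_mul_of_nonneg_right _ hd0
      apply mul_le_mul_of_nonneg_right _ hS2pos.le
      linarith only [hC40LH, hLHpos]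
    have t5 : 2 * (LH * S2 * e) ≤ C * S3 * e * (p + q) := by
      have u2 : LH * S2 * e ≤ LH * (5 * (4 * (p + q)) * S3) * e :=
        mul_le_mul_of_nonneg_right (mul_le_mul_of_nonneg_left hS2le hLHpos.le) he0
      have u3 : 2 * (LH * (5 * (4 * (p + q)) * S3) * e) = 40 * LH * (S3 * e * (p + q)) := by
        ring
      have u4 : 40 * LH * (S3 * e * (p + q)) ≤ C * (S3 * e * (p + q)) :=
        mul_le_mul_of_nonneg_right hC40LH hnn
      have u5 : C * (S3 * e * (p + q)) = C * S3 * e * (p + q) := by ring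
      linarith only [u2, u3, u4, u5]
    have expand : LH * S2 * (d + e) + LH * S2 * e = LH * S2 * d + 2 * (LH * S2 * e) := by
      ring
    linarith only [boundII, expand, t1, t5]
  · -- good case: 2r < ‖A₂‖ and 2e < ‖A₄‖
    set v := A₁ - A₂ with hv
    set w := A₃ - A₄ with hw
    set γ : ℝ → E2 := fun t => A₂ + t • v with hγ
    set γ' : ℝ → E2 := fun t => A₄ + t • w with hγ'
    have hγnorm : ∀ t ∈ Set.Icc (0:ℝ) 1, ‖A₂‖ / 2 ≤ ‖γ t‖ := by
      intro t ht
      have h0 : ‖A₂‖ ≤ ‖A₂ + t • v‖ + ‖t • v‖ := by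
        simpa using norm_sub_le (A₂ + t • v) (t • v)
      have h2 : ‖t • v‖ ≤ r := by
        rw [norm_smul, Real.norm_eq_abs, abs_of_nonneg ht.1]
        have hv1 : ‖v‖ = r := by rw [hr]
        rw [← hv1]
        exact mul_le_of_le_one_left (norm_nonneg v) ht.2
      have : γ t = A₂ + t • v := by rw [hγ]
      rw [this]
      linarith only [h0, h2, hc3]
    have hγ'norm : ∀ t ∈ Set.Icc (0:ℝ) 1, ‖A₄‖ / 2 ≤ ‖γ' t‖ := by
      intro t ht
      have h0 : ‖A₄‖ ≤ ‖A₄ + t • w‖ + ‖t • w‖ := by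
        simpa using norm_sub_le (A₄ + t • w) (t • w)
      have h2 : ‖t • w‖ ≤ e := by
        rw [norm_smul, Real.norm_eq_abs, abs_of_nonneg ht.1]
        have hw1 : ‖w‖ = e := by rw [he]
        rw [← hw1]
        exact mul_le_of_le_one_left (norm_nonneg w) ht.2
      have : γ' t = A₄ + t • w := by rw [hγ']
      rw [this]
      linarith only [h0, h2, hc1]
    have hγne : ∀ t ∈ Set.Icc (0:ℝ) 1, γ t ≠ 0 := by
      intro t ht h0
      have := hγnorm t ht
      rw [h0, norm_zero] at this
      linarith only [this, a2]
    have hγ'ne : ∀ t ∈ Set.Icc (0:ℝ) 1, γ' t ≠ 0 := by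
      intro t ht h0
      have := hγ'norm t ht
      rw [h0, norm_zero] at this
      linarith only [this, a4]
    have hder : ∀ t ∈ Set.Icc (0:ℝ) 1,
        HasDerivWithinAt (fun s => H (γ s) - H (γ' s))
          (g (γ t) v - g (γ' t) w) (Set.Icc 0 1) t := by
      intro t ht
      have hγd : HasDerivAt γ v t := by
        rw [hγ]
        simpa using ((hasDerivAt_id t).smul_const v).const_add A₂
      have hγ'd : HasDerivAt γ' w t := by
        rw [hγ']
        simpa using ((hasDerivAt_id t).smul_const w).const_add A₄
      have hd1 : HasDerivAt (fun s => H (γ s)) (g (γ t) v) t :=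
        ((hdiff _ (hγne t ht)).hasFDerivAt).comp_hasDerivAt t hγd
      have hd2 : HasDerivAt (fun s => H (γ' s)) (g (γ' t) w) t :=
        ((hdiff _ (hγ'ne t ht)).hasFDerivAt).comp_hasDerivAt t hγ'd
      exact (hd1.sub hd2).hasDerivWithinAt
    have hbound : ∀ t ∈ Set.Ico (0:ℝ) 1,
        ‖g (γ t) v - g (γ' t) w‖
          ≤ 4 * K1 / ‖A₂‖ ^ 2 * d + LG * (8 / ‖A₂‖ ^ 3 + 8 / ‖A₄‖ ^ 3) * (p + q) * e := by
      intro t ht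
      have ht' : t ∈ Set.Icc (0:ℝ) 1 := Set.Ico_subset_Icc_self ht
      have hγt := hγnorm t ht'
      have hγ't := hγ'norm t ht'
      have hγtpos : 0 < ‖γ t‖ := lt_of_lt_of_le (half_pos a2) hγt
      have hγ'tpos : 0 < ‖γ' t‖ := lt_of_lt_of_le (half_pos a4) hγ't
      have hsplit : g (γ t) v - g (γ' t) w = g (γ t) (v - w) + (g (γ t) - g (γ' t)) w := by
        simp only [map_sub, ContinuousLinearMap.sub_apply]
        ring
      have hvw : ‖v - w‖ = d := by rw [hd]
      have hwe : ‖w‖ = e := by rw [he]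
      -- distance between the two curves
      have hdist : ‖γ t - γ' t‖ ≤ p + q := by
        have hidq : γ t - γ' t = -((1 - t) • (A₄ - A₂) + t • (A₃ - A₁)) := by
          rw [hγ, hγ', hv, hw]
          simp only [smul_sub, sub_smul, one_smul, neg_add, neg_sub]
          abel
        rw [hidq, norm_neg]
        have hb1 : ‖(1 - t) • (A₄ - A₂) + t • (A₃ - A₁)‖
            ≤ ‖(1 - t) • (A₄ - A₂)‖ + ‖t • (A₃ - A₁)‖ := norm_add_le _ _
        rw [norm_smul, norm_smul, Real.norm_eq_abs, Real.norm_eq_abs,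
          abs_of_nonneg (by linarith [ht.2] : (0:ℝ) ≤ 1 - t), abs_of_nonneg ht.1] at hb1
        have hpp : ‖A₃ - A₁‖ = p := by rw [hp]
        have hqq : ‖A₄ - A₂‖ = q := by rw [hq]
        rw [hpp, hqq] at hb1
        have w1 : (0:ℝ) ≤ (1 - t) * p :=
          mul_nonneg (by linarith only [ht.2] : (0:ℝ) ≤ 1 - t) hp0
        have w2 : (0:ℝ) ≤ t * q := mul_nonneg ht.1 hq0
        linarith only [hb1, w1, w2]
      -- operator norm bounds
      have hg1 : ‖g (γ t)‖ ≤ 4 * K1 / ‖A₂‖ ^ 2 := by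
        refine le_trans (hK1' _ (hγne t ht')) ?_
        have step1 : K1 / ‖γ t‖ ^ 2 ≤ K1 / (‖A₂‖ / 2) ^ 2 := by
          apply div_le_div_of_nonneg_left hK1pos.le (by positivity)
          exact pow_le_pow_left₀ (by positivity) hγt 2
        have step2 : K1 / (‖A₂‖ / 2) ^ 2 = 4 * K1 / ‖A₂‖ ^ 2 := by
          have h0 : ‖A₂‖ ≠ 0 := ne_of_gt a2
          field_simp
          ring
        linarith only [step1, step2]
      have hg2 : ‖g (γ t) - g (γ' t)‖ ≤ LG * (8 / ‖A₂‖ ^ 3 + 8 / ‖A₄‖ ^ 3) * (p + q) := by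
        have := lipG (γ t) (γ' t) (hγne t ht') (hγ'ne t ht')
        have hsum : 1 / ‖γ t‖ ^ 3 + 1 / ‖γ' t‖ ^ 3 ≤ 8 / ‖A₂‖ ^ 3 + 8 / ‖A₄‖ ^ 3 := by
          have s1 : 1 / ‖γ t‖ ^ 3 ≤ 8 / ‖A₂‖ ^ 3 := by
            rw [div_le_div_iff₀ (by positivity) (by positivity)]
            calc 1 * ‖A₂‖ ^ 3 = 8 * (‖A₂‖ / 2) ^ 3 := by ring
              _ ≤ 8 * ‖γ t‖ ^ 3 := by
                  have := pow_le_pow_left₀ (by positivity : (0:ℝ) ≤ ‖A₂‖ / 2) hγt 3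
                  linarith only [this]
          have s2 : 1 / ‖γ' t‖ ^ 3 ≤ 8 / ‖A₄‖ ^ 3 := by
            rw [div_le_div_iff₀ (by positivity) (by positivity)]
            calc 1 * ‖A₄‖ ^ 3 = 8 * (‖A₄‖ / 2) ^ 3 := by ring
              _ ≤ 8 * ‖γ' t‖ ^ 3 := by
                  have := pow_le_pow_left₀ (by positivity : (0:ℝ) ≤ ‖A₄‖ / 2) hγ't 3
                  linarith only [this]
          linarith only [s1, s2]
        calc ‖g (γ t) - g (γ' t)‖
            ≤ LG * (1 / ‖γ t‖ ^ 3 + 1 / ‖γ' t‖ ^ 3) * ‖γ t - γ' t‖ := this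
          _ ≤ LG * (8 / ‖A₂‖ ^ 3 + 8 / ‖A₄‖ ^ 3) * (p + q) := by
              apply mul_le_mul (mul_le_mul_of_nonneg_left hsum hLGpos.le) hdist
                (norm_nonneg _)
              apply mul_nonneg hLGpos.le
              positivity
      calc ‖g (γ t) v - g (γ' t) w‖
          = ‖g (γ t) (v - w) + (g (γ t) - g (γ' t)) w‖ := by rw [hsplit]
        _ ≤ ‖g (γ t) (v - w)‖ + ‖(g (γ t) - g (γ' t)) w‖ := norm_add_le _ _
        _ ≤ ‖g (γ t)‖ * ‖v - w‖ + ‖g (γ t) - g (γ' t)‖ * ‖w‖ :=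
            add_le_add (ContinuousLinearMap.le_opNorm _ _) (ContinuousLinearMap.le_opNorm _ _)
        _ ≤ (4 * K1 / ‖A₂‖ ^ 2) * d + (LG * (8 / ‖A₂‖ ^ 3 + 8 / ‖A₄‖ ^ 3) * (p + q)) * e := by
            rw [hvw, hwe]
            apply add_le_add
            · exact mul_le_mul_of_nonneg_right hg1 hd0
            · exact mul_le_mul_of_nonneg_right hg2 he0
        _ = 4 * K1 / ‖A₂‖ ^ 2 * d + LG * (8 / ‖A₂‖ ^ 3 + 8 / ‖A₄‖ ^ 3) * (p + q) * e := by
            ring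
    have MVT := norm_image_sub_le_of_norm_deriv_le_segment_01' hder hbound
    have hγ1 : γ 1 = A₁ := by
      rw [hγ]; simp [hv]
    have hγ0 : γ 0 = A₂ := by
      rw [hγ]; simp
    have hγ'1 : γ' 1 = A₃ := by
      rw [hγ']; simp [hw]
    have hγ'0 : γ' 0 = A₄ := by
      rw [hγ']; simp
    rw [hγ1, hγ0, hγ'1, hγ'0] at MVT
    have hMVT2 : ‖H A₁ - H A₂ - (H A₃ - H A₄)‖
        ≤ 4 * K1 / ‖A₂‖ ^ 2 * d + LG * (8 / ‖A₂‖ ^ 3 + 8 / ‖A₄‖ ^ 3) * (p + q) * e := by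
      rw [show H A₁ - H A₂ - (H A₃ - H A₄) = H A₁ - H A₃ - (H A₂ - H A₄) from by ring]
      exact MVT
    -- final comparisons
    have hS2a2 : 1 / ‖A₂‖ ^ 2 ≤ S2 := by
      have u : (0:ℝ) ≤ 1 / ‖A₄‖ ^ 2 := by positivity
      linarith only [hS2_24, u]
    have fin1 : 4 * K1 / ‖A₂‖ ^ 2 * d ≤ C * S2 * d := by
      apply mul_le_mul_of_nonneg_right _ hd0
      calc 4 * K1 / ‖A₂‖ ^ 2 = 4 * K1 * (1 / ‖A₂‖ ^ 2) := by ring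
        _ ≤ C * S2 := by
            apply mul_le_mul hC4K1 hS2a2 (by positivity) hCpos.le
    have fin2 : LG * (8 / ‖A₂‖ ^ 3 + 8 / ‖A₄‖ ^ 3) * (p + q) * e ≤ C * S3 * e * (p + q) := by
      have u1 : LG * (8 / ‖A₂‖ ^ 3 + 8 / ‖A₄‖ ^ 3) = 8 * LG * (1 / ‖A₂‖ ^ 3 + 1 / ‖A₄‖ ^ 3) := by
        ring
      have u2 : 8 * LG * (1 / ‖A₂‖ ^ 3 + 1 / ‖A₄‖ ^ 3) ≤ C * S3 :=
        mul_le_mul hC8LG hS3_24 (by positivity) hCpos.le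
      calc LG * (8 / ‖A₂‖ ^ 3 + 8 / ‖A₄‖ ^ 3) * (p + q) * e
          = (8 * LG * (1 / ‖A₂‖ ^ 3 + 1 / ‖A₄‖ ^ 3)) * ((p + q) * e) := by ring
        _ ≤ (C * S3) * ((p + q) * e) := by
            apply mul_le_mul_of_nonneg_right u2
            exact mul_nonneg (add_nonneg hp0 hq0) he0
        _ = C * S3 * e * (p + q) := by ring
    exact le_trans hMVT2 (add_le_add fin1 fin2)


end Stmt13Aux

/-- Four-point difference estimate for `H`. -/
theorem stmt13 :
    ∃ C > 0, ∀ i₁ i₂ i₃ : Fin 2,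
      ∀ A₁ A₂ A₃ A₄ : EuclideanSpace ℝ (Fin 2),
        A₁ ≠ 0 → A₂ ≠ 0 → A₃ ≠ 0 → A₄ ≠ 0 →
        |(Hfun i₁ i₂ i₃ A₁ - Hfun i₁ i₂ i₃ A₂)
            - (Hfun i₁ i₂ i₃ A₃ - Hfun i₁ i₂ i₃ A₄)|
          ≤ C * (1 / ‖A₁‖ ^ 2 + 1 / ‖A₂‖ ^ 2 + 1 / ‖A₃‖ ^ 2 + 1 / ‖A₄‖ ^ 2)
              * ‖(A₁ - A₂) - (A₃ - A₄)‖
            + C * (1 / ‖A₁‖ ^ 3 + 1 / ‖A₂‖ ^ 3 + 1 / ‖A₃‖ ^ 3 + 1 / ‖A₄‖ ^ 3)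
              * ‖A₃ - A₄‖ * (‖A₃ - A₁‖ + ‖A₄ - A₂‖) := by
  choose Cf hCfpos hCf using
    fun v : Fin 2 × Fin 2 × Fin 2 => Stmt13Aux.key v.1 v.2.1 v.2.2
  refine ⟨∑ v : Fin 2 × Fin 2 × Fin 2, Cf v, ?_, ?_⟩
  · exact Finset.sum_pos (fun v _ => hCfpos v) Finset.univ_nonempty
  · intro i₁ i₂ i₃ A₁ A₂ A₃ A₄ h1 h2 h3 h4
    have hle : Cf (i₁, i₂, i₃) ≤ ∑ v : Fin 2 × Fin 2 × Fin 2, Cf v :=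
      Finset.single_le_sum (fun v _ => (hCfpos v).le) (Finset.mem_univ _)
    have hkey := hCf (i₁, i₂, i₃) A₁ A₂ A₃ A₄ h1 h2 h3 h4
    refine le_trans hkey (add_le_add ?_ ?_)
    · apply mul_le_mul_of_nonneg_right _ (norm_nonneg _)
      apply mul_le_mul_of_nonneg_right hle
      positivity
    · apply mul_le_mul_of_nonneg_right _ (add_nonneg (norm_nonneg _) (norm_nonneg _))
      apply mul_le_mul_of_nonneg_right _ (norm_nonneg _)
      apply mul_le_mul_of_nonneg_right hle
      positivity
end
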